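/- arXiv:1011.3995 — 6 statements merged into one kernel-verified Lean document; each statement's English description precedes it below -/
import Mathlib

section
/- Converse of the shifting lemma. Let f be a continuous even probability density on ℝ, positive on an open interval (−b₀, b₀) and zero outside, and let μ be the measure with density f. Suppose μ has the shifting property: for all reals a < b with a + b ≥ 0 and all reals a ≤ a' < b' with μ((a,b)) = μ((a',b')), one has f(a) + f(b) ≥ f(a') + f(b'); and for all reals a < b with a + b ≤ 0 and all reals a' < b' ≤ b with μ((a,b)) = μ((a',b')), one has f(a) + f(b) ≥ f(a') + f(b'). Then μ is log-concave; equivalently, the function J_μ is concave on (0,1). -/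
open MeasureTheory Set Filter Topology
open scoped ENNReal

lemma line_integral (m c q α β : ℝ) (hm : m ≠ 0)
    (hpos : ∀ u ∈ Set.uIcc α β, 0 < c + m * (u - q)) :
    ∫ u in α..β, (c + m * (u - q))⁻¹
      = (Real.log (c + m * (β - q)) - Real.log (c + m * (α - q))) / m := by
  have h : ∀ u ∈ Set.uIcc α β, HasDerivAt (fun u => Real.log (c + m * (u - q)) / m)
      ((c + m * (u - q))⁻¹) u := by
    intro u hu
    have h1 : HasDerivAt (fun u => c + m * (u - q)) m u := by
      simpa using (((hasDerivAt_id u).sub_const q).const_mul m).const_add c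
    have h3 := (Real.hasDerivAt_log (ne_of_gt (hpos u hu))).comp u h1
    have h2 : HasDerivAt (fun u => Real.log (c + m * (u - q)) / m)
        ((c + m * (u - q))⁻¹ * m / m) u := h3.div_const m
    simpa [mul_div_assoc, div_self hm] using h2
  have hint : IntervalIntegrable (fun u => (c + m * (u - q))⁻¹) MeasureTheory.volume α β := by
    apply ContinuousOn.intervalIntegrable
    apply ContinuousOn.inv₀
    · fun_prop
    · intro u hu; exact ne_of_gt (hpos u hu)
  rw [intervalIntegral.integral_eq_sub_of_hasDerivAt h hint]
  ring

lemma chord_le {J : ℝ → ℝ} {S : Set ℝ} (hc : ConcaveOn ℝ S J) {x z u : ℝ}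
    (hx : x ∈ S) (hz : z ∈ S) (hxz : x < z) (hu : u ∈ Icc x z) :
    J x + (J z - J x) / (z - x) * (u - x) ≤ J u := by
  obtain ⟨h1, h2⟩ := hu
  have hzx : 0 < z - x := sub_pos.2 hxz
  have ha : 0 ≤ (z - u) / (z - x) := div_nonneg (by linarith) hzx.le
  have hb : 0 ≤ (u - x) / (z - x) := div_nonneg (by linarith) hzx.le
  have hab : (z - u) / (z - x) + (u - x) / (z - x) = 1 := by
    field_simp
    ring
  have hcomb : ((z - u) / (z - x)) • x + ((u - x) / (z - x)) • z = u := by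
    simp only [smul_eq_mul]
    field_simp
    ring
  have h3 := hc.2 hx hz ha hb hab
  rw [hcomb] at h3
  have h4 : J x + (J z - J x) / (z - x) * (u - x)
      = ((z - u) / (z - x)) • J x + ((u - x) / (z - x)) • J z := by
    simp only [smul_eq_mul]
    field_simp
    ring
  linarith [h3, h4.ge]

lemma line_pos {vx vz x z u : ℝ} (hvx : 0 < vx) (hvz : 0 < vz) (hxz : x < z)
    (hu : u ∈ Icc x z) : 0 < vx + (vz - vx) / (z - x) * (u - x) := by
  obtain ⟨h1, h2⟩ := hu
  have hzx : 0 < z - x := sub_pos.2 hxz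
  have h4 : vx + (vz - vx) / (z - x) * (u - x)
      = ((z - u) * vx + (u - x) * vz) / (z - x) := by field_simp; ring
  rw [h4]
  apply div_pos _ hzx
  rcases eq_or_lt_of_le h2 with h | h
  · subst h; nlinarith
  · nlinarith

lemma slope_core {J : ℝ → ℝ} (hJc : ConcaveOn ℝ (Ioo 0 1) J)
    (hJpos : ∀ u ∈ Ioo (0:ℝ) 1, 0 < J u)
    {r q t : ℝ} (hr : r ∈ Ioo (0:ℝ) 1) (ht : t ∈ Ioo (0:ℝ) 1)
    (hrq : r < q) (hqt : q < t) :
    (Real.log (J t) - Real.log (J q)) * (∫ u in r..q, (J u)⁻¹)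
      ≤ (Real.log (J q) - Real.log (J r)) * (∫ u in q..t, (J u)⁻¹) := by
  have hq : q ∈ Ioo (0:ℝ) 1 := ⟨hr.1.trans hrq, hqt.trans ht.2⟩
  have hJcont : ContinuousOn J (Ioo 0 1) := hJc.continuousOn isOpen_Ioo
  have hJr := hJpos r hr
  have hJq := hJpos q hq
  have hJt := hJpos t ht
  have hsub1 : Icc r q ⊆ Ioo (0:ℝ) 1 := fun u hu => ⟨hr.1.trans_le hu.1, lt_of_le_of_lt hu.2 hq.2⟩
  have hsub2 : Icc q t ⊆ Ioo (0:ℝ) 1 := fun u hu => ⟨hq.1.trans_le hu.1, lt_of_le_of_lt hu.2 ht.2⟩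
  have hJpos1 : ∀ u ∈ Icc r q, 0 < J u := fun u hu => hJpos u (hsub1 hu)
  have hJpos2 : ∀ u ∈ Icc q t, 0 < J u := fun u hu => hJpos u (hsub2 hu)
  have hint1 : IntervalIntegrable (fun u => (J u)⁻¹) volume r q := by
    apply ContinuousOn.intervalIntegrable
    rw [uIcc_of_le hrq.le]
    exact (hJcont.mono hsub1).inv₀ (fun u hu => (hJpos1 u hu).ne')
  have hint2 : IntervalIntegrable (fun u => (J u)⁻¹) volume q t := by
    apply ContinuousOn.intervalIntegrable
    rw [uIcc_of_le hqt.le]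
    exact (hJcont.mono hsub2).inv₀ (fun u hu => (hJpos2 u hu).ne')
  set s₁ := (J q - J r) / (q - r) with hs₁def
  set s₂ := (J t - J q) / (t - q) with hs₂def
  have hqr : (0:ℝ) < q - r := sub_pos.2 hrq
  have htq : (0:ℝ) < t - q := sub_pos.2 hqt
  have hss : s₂ ≤ s₁ := hJc.slope_anti_adjacent hr ht hrq hqt
  have hs₁qr : s₁ * (q - r) = J q - J r := div_mul_cancel₀ _ hqr.ne'
  have hs₂tq : s₂ * (t - q) = J t - J q := div_mul_cancel₀ _ htq.ne'
  have hℓ₁nonneg : 0 ≤ ∫ u in r..q, (J u)⁻¹ :=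
    intervalIntegral.integral_nonneg hrq.le (fun u hu => (inv_pos.2 (hJpos1 u hu)).le)
  have hℓ₂nonneg : 0 ≤ ∫ u in q..t, (J u)⁻¹ :=
    intervalIntegral.integral_nonneg hqt.le (fun u hu => (inv_pos.2 (hJpos2 u hu)).le)
  rcases lt_trichotomy s₁ 0 with hs₁ | hs₁ | hs₁
  · -- s₁ < 0
    have hs₂0 : s₂ < 0 := lt_of_le_of_lt hss hs₁
    have hJqr : J q < J r := by
      have := mul_neg_of_neg_of_pos hs₁ hqr
      linarith [hs₁qr]
    have hJtq : J t < J q := by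
      have := mul_neg_of_neg_of_pos hs₂0 htq
      linarith [hs₂tq]
    have hL₂chord : ∀ u ∈ Icc q t, J q + s₂ * (u - q) ≤ J u := by
      intro u hu
      have h3 := chord_le hJc hq ht hqt hu
      rw [← hs₂def] at h3
      exact h3
    have hL₂pos2 : ∀ u ∈ Icc q t, 0 < J q + s₂ * (u - q) := by
      intro u hu
      have h3 := line_pos hJq hJt hqt hu
      rw [← hs₂def] at h3
      exact h3
    have hL₂ub : ∀ u ∈ Icc r q, J u ≤ J q + s₂ * (u - q) := by
      intro u hu
      rcases eq_or_lt_of_le hu.2 with h | h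
      · rw [h]; simp
      · have h5 := hJc.slope_anti_adjacent (hsub1 hu) ht h hqt
        rw [← hs₂def] at h5
        have huq : 0 < q - u := sub_pos.2 h
        have h6 : s₂ * (q - u) ≤ J q - J u := (le_div_iff₀ huq).mp h5
        have e : s₂ * (u - q) = -(s₂ * (q - u)) := by ring
        linarith
    have hL₂pos1 : ∀ u ∈ Icc r q, 0 < J q + s₂ * (u - q) :=
      fun u hu => lt_of_lt_of_le (hJpos1 u hu) (hL₂ub u hu)
    have hI₂ : (∫ u in q..t, (J u)⁻¹) ≤ (Real.log (J t) - Real.log (J q)) / s₂ := by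
      have hmono := intervalIntegral.integral_mono_on hqt.le hint2
        (ContinuousOn.intervalIntegrable (by
          rw [uIcc_of_le hqt.le]
          exact ContinuousOn.inv₀ (by fun_prop) (fun u hu => (hL₂pos2 u hu).ne')))
        (fun u hu => inv_anti₀ (hL₂pos2 u hu) (hL₂chord u hu))
      have heval := line_integral s₂ (J q) q q t hs₂0.ne
        (fun u hu => hL₂pos2 u (by rwa [uIcc_of_le hqt.le] at hu))
      rw [heval] at hmono
      have h7 : J q + s₂ * (t - q) = J t := by linarith
      have h8 : J q + s₂ * (q - q) = J q := by ring_nf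
      rw [h7, h8] at hmono
      exact hmono
    have hI₁ : (Real.log (J q) - Real.log (J r)) / s₂ ≤ ∫ u in r..q, (J u)⁻¹ := by
      have hmono := intervalIntegral.integral_mono_on hrq.le
        (ContinuousOn.intervalIntegrable (by
          rw [uIcc_of_le hrq.le]
          exact ContinuousOn.inv₀ (by fun_prop) (fun u hu => (hL₂pos1 u hu).ne')))
        hint1
        (fun u hu => inv_anti₀ (hJpos1 u hu) (hL₂ub u hu))
      have heval := line_integral s₂ (J q) q r q hs₂0.ne
        (fun u hu => hL₂pos1 u (by rwa [uIcc_of_le hrq.le] at hu))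
      rw [heval] at hmono
      have h8 : J q + s₂ * (q - q) = J q := by ring_nf
      rw [h8] at hmono
      have h9 : J r ≤ J q + s₂ * (r - q) := by
        have h9a := mul_le_mul_of_nonneg_right hss hqr.le
        have e : s₂ * (r - q) = -(s₂ * (q - r)) := by ring
        linarith [hs₁qr]
      have h10 : Real.log (J r) ≤ Real.log (J q + s₂ * (r - q)) := Real.log_le_log hJr h9
      have h11 : (Real.log (J q) - Real.log (J r)) / s₂
          ≤ (Real.log (J q) - Real.log (J q + s₂ * (r - q))) / s₂ := by
        rw [div_eq_mul_inv, div_eq_mul_inv]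
        exact mul_le_mul_of_nonpos_right (by linarith) (inv_nonpos.2 hs₂0.le)
      linarith
    have hKtq : Real.log (J t) ≤ Real.log (J q) := Real.log_le_log hJt hJtq.le
    have hKqr : Real.log (J q) ≤ Real.log (J r) := Real.log_le_log hJq hJqr.le
    calc (Real.log (J t) - Real.log (J q)) * (∫ u in r..q, (J u)⁻¹)
        ≤ (Real.log (J t) - Real.log (J q)) * ((Real.log (J q) - Real.log (J r)) / s₂) :=
          mul_le_mul_of_nonpos_left hI₁ (by linarith)
      _ = (Real.log (J q) - Real.log (J r)) * ((Real.log (J t) - Real.log (J q)) / s₂) := by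
          ring
      _ ≤ (Real.log (J q) - Real.log (J r)) * (∫ u in q..t, (J u)⁻¹) :=
          mul_le_mul_of_nonpos_left hI₂ (by linarith)
  · -- s₁ = 0
    have hJqr : J q = J r := by
      rw [hs₁] at hs₁qr
      linarith [hs₁qr]
    have hJtq : J t ≤ J q := by
      have h9a := mul_le_mul_of_nonneg_right hss htq.le
      rw [hs₁, zero_mul] at h9a
      linarith [hs₂tq]
    have h1 : Real.log (J t) - Real.log (J q) ≤ 0 :=
      sub_nonpos.2 (Real.log_le_log hJt hJtq)
    have h2 : Real.log (J q) - Real.log (J r) = 0 := by rw [hJqr]; ring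
    rw [h2, zero_mul]
    exact mul_nonpos_of_nonpos_of_nonneg h1 hℓ₁nonneg
  · -- s₁ > 0
    have hJqr : J r < J q := by
      have := mul_pos hs₁ hqr
      linarith [hs₁qr]
    have hKqr : Real.log (J r) ≤ Real.log (J q) := Real.log_le_log hJr hJqr.le
    have hL₁chord : ∀ u ∈ Icc r q, J q + s₁ * (u - q) ≤ J u := by
      intro u hu
      have h3 := chord_le hJc hr hq hrq hu
      rw [← hs₁def] at h3
      have e : s₁ * (u - r) = s₁ * (u - q) + s₁ * (q - r) := by ring
      linarith [hs₁qr]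
    have hL₁pos1 : ∀ u ∈ Icc r q, 0 < J q + s₁ * (u - q) := by
      intro u hu
      have h3 := line_pos hJr hJq hrq hu
      rw [← hs₁def] at h3
      have e : s₁ * (u - r) = s₁ * (u - q) + s₁ * (q - r) := by ring
      linarith [hs₁qr]
    have hL₁ub : ∀ u ∈ Icc q t, J u ≤ J q + s₁ * (u - q) := by
      intro u hu
      rcases eq_or_lt_of_le hu.1 with h | h
      · rw [← h]; simp
      · have h5 := hJc.slope_anti_adjacent hr (hsub2 hu) hrq h
        rw [← hs₁def] at h5
        have huq : 0 < u - q := sub_pos.2 h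
        have h6 : J u - J q ≤ s₁ * (u - q) := by
          have := (div_le_iff₀ huq).mp h5
          linarith
        linarith
    have hL₁pos2 : ∀ u ∈ Icc q t, 0 < J q + s₁ * (u - q) :=
      fun u hu => lt_of_lt_of_le (hJpos2 u hu) (hL₁ub u hu)
    have hI₁ : (∫ u in r..q, (J u)⁻¹) ≤ (Real.log (J q) - Real.log (J r)) / s₁ := by
      have hmono := intervalIntegral.integral_mono_on hrq.le hint1
        (ContinuousOn.intervalIntegrable (by
          rw [uIcc_of_le hrq.le]
          exact ContinuousOn.inv₀ (by fun_prop) (fun u hu => (hL₁pos1 u hu).ne')))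
        (fun u hu => inv_anti₀ (hL₁pos1 u hu) (hL₁chord u hu))
      have heval := line_integral s₁ (J q) q r q hs₁.ne'
        (fun u hu => hL₁pos1 u (by rwa [uIcc_of_le hrq.le] at hu))
      rw [heval] at hmono
      have h7 : J q + s₁ * (r - q) = J r := by
        have e : s₁ * (r - q) = -(s₁ * (q - r)) := by ring
        linarith [hs₁qr]
      have h8 : J q + s₁ * (q - q) = J q := by ring_nf
      rw [h7, h8] at hmono
      exact hmono
    rcases le_or_gt s₂ 0 with hs₂0 | hs₂0
    · -- s₂ ≤ 0 : RHS of goal ≥ 0, LHS ≤ 0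
      have hJtq : J t ≤ J q := by
        have h9a := mul_le_mul_of_nonneg_right hs₂0 htq.le
        rw [zero_mul] at h9a
        linarith [hs₂tq]
      have h1 : Real.log (J t) - Real.log (J q) ≤ 0 :=
        sub_nonpos.2 (Real.log_le_log hJt hJtq)
      have h2 : 0 ≤ Real.log (J q) - Real.log (J r) := sub_nonneg.2 hKqr
      calc (Real.log (J t) - Real.log (J q)) * (∫ u in r..q, (J u)⁻¹)
          ≤ 0 := mul_nonpos_of_nonpos_of_nonneg h1 hℓ₁nonneg
        _ ≤ (Real.log (J q) - Real.log (J r)) * (∫ u in q..t, (J u)⁻¹) :=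
            mul_nonneg h2 hℓ₂nonneg
    · -- s₂ > 0
      have hJtq : J q < J t := by
        have := mul_pos hs₂0 htq
        linarith [hs₂tq]
      have hKtq : Real.log (J q) ≤ Real.log (J t) := Real.log_le_log hJq hJtq.le
      have hI₂ : (Real.log (J t) - Real.log (J q)) / s₁ ≤ ∫ u in q..t, (J u)⁻¹ := by
        have hmono := intervalIntegral.integral_mono_on hqt.le
          (ContinuousOn.intervalIntegrable (by
            rw [uIcc_of_le hqt.le]
            exact ContinuousOn.inv₀ (by fun_prop) (fun u hu => (hL₁pos2 u hu).ne')))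
          hint2
          (fun u hu => inv_anti₀ (hJpos2 u hu) (hL₁ub u hu))
        have heval := line_integral s₁ (J q) q q t hs₁.ne'
          (fun u hu => hL₁pos2 u (by rwa [uIcc_of_le hqt.le] at hu))
        rw [heval] at hmono
        have h8 : J q + s₁ * (q - q) = J q := by ring_nf
        rw [h8] at hmono
        have h9 : J t ≤ J q + s₁ * (t - q) := by
          have h9a := mul_le_mul_of_nonneg_right hss htq.le
          linarith [hs₂tq]
        have h10 : Real.log (J t) ≤ Real.log (J q + s₁ * (t - q)) := Real.log_le_log hJt h9
        have h11 : (Real.log (J t) - Real.log (J q)) / s₁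
            ≤ (Real.log (J q + s₁ * (t - q)) - Real.log (J q)) / s₁ :=
          (div_le_div_iff_of_pos_right hs₁).2 (by linarith)
        linarith
      calc (Real.log (J t) - Real.log (J q)) * (∫ u in r..q, (J u)⁻¹)
          ≤ (Real.log (J t) - Real.log (J q)) * ((Real.log (J q) - Real.log (J r)) / s₁) :=
            mul_le_mul_of_nonneg_left hI₁ (by linarith)
        _ = (Real.log (J q) - Real.log (J r)) * ((Real.log (J t) - Real.log (J q)) / s₁) := by
            ring
        _ ≤ (Real.log (J q) - Real.log (J r)) * (∫ u in q..t, (J u)⁻¹) :=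
            mul_le_mul_of_nonneg_left hI₂ (by linarith)

lemma concaveOn_of_increments (J : ℝ → ℝ) (hcont : ContinuousOn J (Ioo 0 1))
    (hinc : ∀ a b c d : ℝ, a ∈ Ioo (0:ℝ) 1 → d ∈ Ioo (0:ℝ) 1 → a < b → b ≤ c → c < d →
      b - a = d - c → J a + J d ≤ J b + J c) :
    ConcaveOn ℝ (Ioo 0 1) J := by
  have hJint : ∀ a b : ℝ, a ∈ Ioo (0:ℝ) 1 → b ∈ Ioo (0:ℝ) 1 →
      IntervalIntegrable J volume a b := by
    intro a b ha hb
    apply ContinuousOn.intervalIntegrable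
    apply hcont.mono
    intro u hu
    rcases le_total a b with h | h
    · rw [uIcc_of_le h] at hu; exact ⟨ha.1.trans_le hu.1, lt_of_le_of_lt hu.2 hb.2⟩
    · rw [uIcc_of_ge h] at hu; exact ⟨hb.1.trans_le hu.1, lt_of_le_of_lt hu.2 ha.2⟩
  -- limits of averages
  have hlim : ∀ w ∈ Ioo (0:ℝ) 1, Tendsto (fun δ => (∫ u in w..(w+δ), J u)/δ)
      (𝓝[>] (0:ℝ)) (𝓝 (J w)) := by
    intro w hw
    have hD : HasDerivAt (fun b => ∫ u in w..b, J u) (J w) w :=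
      intervalIntegral.integral_hasDerivAt_right (hJint w w hw hw)
        (hcont.stronglyMeasurableAtFilter isOpen_Ioo w hw)
        (hcont.continuousAt (isOpen_Ioo.mem_nhds hw))
    have hslope := hasDerivAt_iff_tendsto_slope.mp hD
    have hmap : Tendsto (fun δ : ℝ => w + δ) (𝓝[>] (0:ℝ)) (𝓝[≠] w) := by
      apply tendsto_nhdsWithin_of_tendsto_nhds_of_eventually_within
      · have : Tendsto (fun δ : ℝ => w + δ) (𝓝 (0:ℝ)) (𝓝 (w + 0)) :=
          (continuous_const.add continuous_id).tendsto 0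
        rw [add_zero] at this
        exact this.mono_left nhdsWithin_le_nhds
      · filter_upwards [self_mem_nhdsWithin] with δ (hδ : (0:ℝ) < δ)
        simp only [mem_compl_iff, mem_singleton_iff]
        intro h
        nlinarith [h]
    have := hslope.comp hmap
    apply this.congr
    intro δ
    simp only [Function.comp_apply, slope_def_field]
    rw [intervalIntegral.integral_same]
    rw [sub_zero, add_sub_cancel_left]
  have hlim' : ∀ w ∈ Ioo (0:ℝ) 1, Tendsto (fun δ => (∫ u in (w-δ)..w, J u)/δ)
      (𝓝[>] (0:ℝ)) (𝓝 (J w)) := by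
    intro w hw
    have hD : HasDerivAt (fun b => ∫ u in w..b, J u) (J w) w :=
      intervalIntegral.integral_hasDerivAt_right (hJint w w hw hw)
        (hcont.stronglyMeasurableAtFilter isOpen_Ioo w hw)
        (hcont.continuousAt (isOpen_Ioo.mem_nhds hw))
    have hslope := hasDerivAt_iff_tendsto_slope.mp hD
    have hmap : Tendsto (fun δ : ℝ => w - δ) (𝓝[>] (0:ℝ)) (𝓝[≠] w) := by
      apply tendsto_nhdsWithin_of_tendsto_nhds_of_eventually_within
      · have : Tendsto (fun δ : ℝ => w - δ) (𝓝 (0:ℝ)) (𝓝 (w - 0)) :=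
          (continuous_const.sub continuous_id).tendsto 0
        rw [sub_zero] at this
        exact this.mono_left nhdsWithin_le_nhds
      · filter_upwards [self_mem_nhdsWithin] with δ (hδ : (0:ℝ) < δ)
        simp only [mem_compl_iff, mem_singleton_iff]
        intro h
        nlinarith [h]
    have := hslope.comp hmap
    apply this.congr
    intro δ
    simp only [Function.comp_apply, slope_def_field]
    rw [intervalIntegral.integral_same, intervalIntegral.integral_symm]
    have : w - δ - w = -δ := by ring
    rw [this, div_neg]
    ring
  -- representation of shifted-difference integrals
  have hshiftint : ∀ (a b δ : ℝ), a ∈ Ioo (0:ℝ) 1 → b ∈ Ioo (0:ℝ) 1 →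
      a + δ ∈ Ioo (0:ℝ) 1 → b + δ ∈ Ioo (0:ℝ) 1 →
      ContinuousOn (fun u => J (u + δ)) (uIcc a b) := by
    intro a b δ ha hb haδ hbδ
    apply ContinuousOn.comp (t := Ioo (0:ℝ) 1) hcont (by fun_prop)
    intro u hu
    rcases le_total a b with h | h
    · rw [uIcc_of_le h] at hu
      exact ⟨(by linarith [hu.1, haδ.1] : (0:ℝ) < u + δ),
        (by linarith [hu.2, hbδ.2] : u + δ < 1)⟩
    · rw [uIcc_of_ge h] at hu
      exact ⟨(by linarith [hu.1, hbδ.1] : (0:ℝ) < u + δ),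
        (by linarith [hu.2, haδ.2] : u + δ < 1)⟩
  have hrepr : ∀ (a b δ : ℝ), a ∈ Ioo (0:ℝ) 1 → b ∈ Ioo (0:ℝ) 1 →
      a + δ ∈ Ioo (0:ℝ) 1 → b + δ ∈ Ioo (0:ℝ) 1 →
      (∫ u in a..b, (J (u + δ) - J u))
        = (∫ u in b..(b+δ), J u) - (∫ u in a..(a+δ), J u) := by
    intro a b δ ha hb haδ hbδ
    rw [intervalIntegral.integral_sub
      ((hshiftint a b δ ha hb haδ hbδ).intervalIntegrable) (hJint a b ha hb)]
    rw [intervalIntegral.integral_comp_add_right]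
    have e1 := intervalIntegral.integral_add_adjacent_intervals
      (hJint a (a+δ) ha haδ) (hJint (a+δ) b haδ hb)
    have e2 := intervalIntegral.integral_add_adjacent_intervals
      (hJint (a+δ) b haδ hb) (hJint b (b+δ) hb hbδ)
    linarith
  -- the concavity proof via slopes
  apply concaveOn_of_slope_anti_adjacent (convex_Ioo 0 1)
  intro x y z hx hz hxy hyz
  have hy : y ∈ Ioo (0:ℝ) 1 := ⟨hx.1.trans hxy, hyz.trans hz.2⟩
  have hkey : ∀ δ : ℝ, 0 < δ → δ < y - x → δ < z - y →
      (∫ u in y..(z-δ), (J (u + δ) - J u)) * (y - δ - x)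
        ≤ (∫ u in x..(y-δ), (J (u + δ) - J u)) * (z - δ - y) := by
    intro δ hδ hδ1 hδ2
    have hyδ : y - δ ∈ Ioo (0:ℝ) 1 := ⟨by linarith [hx.1], by linarith [hy.2]⟩
    have hzδ : z - δ ∈ Ioo (0:ℝ) 1 := ⟨by linarith [hy.1], by linarith [hz.2]⟩
    have hyx : (0:ℝ) < y - δ - x := by linarith
    have hzy : (0:ℝ) < z - δ - y := by linarith
    have hmemL : ∀ u ∈ Icc x (y - δ), u ∈ Ioo (0:ℝ) 1 ∧ u + δ ∈ Ioo (0:ℝ) 1 := by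
      intro u hu
      exact ⟨⟨hx.1.trans_le hu.1, by linarith [hu.2, hy.2]⟩,
        ⟨by linarith [hu.1, hx.1], by linarith [hu.2, hy.2]⟩⟩
    have hmemR : ∀ v ∈ Icc y (z - δ), v ∈ Ioo (0:ℝ) 1 ∧ v + δ ∈ Ioo (0:ℝ) 1 := by
      intro v hv
      exact ⟨⟨hy.1.trans_le hv.1, by linarith [hv.2, hz.2]⟩,
        ⟨by linarith [hv.1, hy.1], by linarith [hv.2, hz.2]⟩⟩
    have hcontL : ContinuousOn (fun u => J (u + δ) - J u) (uIcc x (y - δ)) :=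
      (hshiftint x (y-δ) δ hx hyδ ⟨by linarith [hx.1], by linarith [hy.2]⟩
        ⟨by linarith [hy.1], by linarith [hy.2]⟩).sub
        (hcont.mono (fun u hu => by
          rw [uIcc_of_le (by linarith : x ≤ y - δ)] at hu
          exact (hmemL u hu).1))
    have hcontR : ContinuousOn (fun u => J (u + δ) - J u) (uIcc y (z - δ)) :=
      (hshiftint y (z-δ) δ hy hzδ ⟨by linarith [hy.1], by linarith [hz.2]⟩
        ⟨by linarith [hz.1], by linarith [hz.2]⟩).sub
        (hcont.mono (fun u hu => by
          rw [uIcc_of_le (by linarith : y ≤ z - δ)] at hu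
          exact (hmemR u hu).1))
    set A := ∫ u in x..(y-δ), (J (u + δ) - J u) with hA
    have hptL : ∀ v, v ∈ Icc y (z - δ) → ∀ u ∈ Icc x (y - δ),
        J (v + δ) - J v ≤ J (u + δ) - J u := by
      intro v hv u hu
      have h := hinc u (u+δ) v (v+δ) (hmemL u hu).1 (hmemR v hv).2 (by linarith)
        (by linarith [hu.2, hv.1]) (by linarith) (by ring)
      linarith
    have hAv : ∀ v ∈ Icc y (z - δ), (J (v+δ) - J v) * (y - δ - x) ≤ A := by
      intro v hv
      have h2 := intervalIntegral.integral_mono_on (by linarith : x ≤ y - δ)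
        (intervalIntegrable_const (μ := volume)) (hcontL.intervalIntegrable) (hptL v hv)
      rw [intervalIntegral.integral_const] at h2
      rw [smul_eq_mul] at h2
      linarith [h2]
    have hB : (∫ u in y..(z-δ), (J (u + δ) - J u)) ≤ (z - δ - y) * (A / (y - δ - x)) := by
      have h2 := intervalIntegral.integral_mono_on (by linarith : y ≤ z - δ)
        (hcontR.intervalIntegrable) (intervalIntegrable_const (μ := volume))
        (fun v hv => (le_div_iff₀ hyx).2 (hAv v hv))
      rw [intervalIntegral.integral_const, smul_eq_mul] at h2
      exact h2
    calc (∫ u in y..(z-δ), (J (u + δ) - J u)) * (y - δ - x)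
        ≤ ((z - δ - y) * (A / (y - δ - x))) * (y - δ - x) :=
          mul_le_mul_of_nonneg_right hB hyx.le
      _ = A * (z - δ - y) := by field_simp
  -- eventual inequality after division by δ
  have hδ₀ : (0:ℝ) < min (y - x) (z - y) := lt_min (by linarith) (by linarith)
  have hev : ∀ᶠ δ in 𝓝[>] (0:ℝ),
      ((∫ u in (z-δ)..z, J u) - (∫ u in y..(y+δ), J u))/δ * (y - δ - x)
        ≤ ((∫ u in (y-δ)..y, J u) - (∫ u in x..(x+δ), J u))/δ * (z - δ - y) := by
    filter_upwards [Ioo_mem_nhdsGT_of_mem (Set.left_mem_Ico.2 hδ₀)] with δ hδmem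
    obtain ⟨hδ, hδm⟩ := hδmem
    have hδ1 : δ < y - x := lt_of_lt_of_le hδm (min_le_left _ _)
    have hδ2 : δ < z - y := lt_of_lt_of_le hδm (min_le_right _ _)
    have hk := hkey δ hδ hδ1 hδ2
    have hyδ : y - δ ∈ Ioo (0:ℝ) 1 := ⟨by linarith [hx.1], by linarith [hy.2]⟩
    have hzδ : z - δ ∈ Ioo (0:ℝ) 1 := ⟨by linarith [hy.1], by linarith [hz.2]⟩
    have e1 := hrepr x (y-δ) δ hx hyδ
      ⟨by linarith [hx.1], by linarith [hy.2]⟩ ⟨by linarith [hy.1], by linarith [hy.2]⟩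
    have e2 := hrepr y (z-δ) δ hy hzδ
      ⟨by linarith [hy.1], by linarith [hz.2]⟩ ⟨by linarith [hz.1], by linarith [hz.2]⟩
    have ey : y - δ + δ = y := by ring
    have ez : z - δ + δ = z := by ring
    rw [ey] at e1
    rw [ez] at e2
    rw [e1, e2] at hk
    rw [div_mul_eq_mul_div, div_mul_eq_mul_div]
    exact (div_le_div_iff_of_pos_right hδ).2 hk
  -- limits
  have htz : Tendsto (fun δ : ℝ => y - δ - x) (𝓝[>] (0:ℝ)) (𝓝 (y - x)) := by
    have h0 : Tendsto (fun δ : ℝ => y - δ - x) (𝓝 (0:ℝ)) (𝓝 (y - 0 - x)) :=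
      ((continuous_const.sub continuous_id).sub continuous_const).tendsto 0
    rw [show y - 0 - x = y - x by ring] at h0
    exact h0.mono_left nhdsWithin_le_nhds
  have htz' : Tendsto (fun δ : ℝ => z - δ - y) (𝓝[>] (0:ℝ)) (𝓝 (z - y)) := by
    have h0 : Tendsto (fun δ : ℝ => z - δ - y) (𝓝 (0:ℝ)) (𝓝 (z - 0 - y)) :=
      ((continuous_const.sub continuous_id).sub continuous_const).tendsto 0
    rw [show z - 0 - y = z - y by ring] at h0
    exact h0.mono_left nhdsWithin_le_nhds
  have hL : Tendsto (fun δ => ((∫ u in (z-δ)..z, J u) - (∫ u in y..(y+δ), J u))/δ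
      * (y - δ - x)) (𝓝[>] (0:ℝ)) (𝓝 ((J z - J y) * (y - x))) := by
    have h1 := ((hlim' z hz).sub (hlim y hy)).mul htz
    apply h1.congr
    intro δ
    rw [sub_div]
  have hR : Tendsto (fun δ => ((∫ u in (y-δ)..y, J u) - (∫ u in x..(x+δ), J u))/δ
      * (z - δ - y)) (𝓝[>] (0:ℝ)) (𝓝 ((J y - J x) * (z - y))) := by
    have h1 := ((hlim' y hy).sub (hlim x hx)).mul htz'
    apply h1.congr
    intro δ
    rw [sub_div]
  have hfinal := le_of_tendsto_of_tendsto hL hR hev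
  exact (div_le_div_iff₀ (sub_pos.2 hyz) (sub_pos.2 hxy)).2 (by linarith)

/-- The measure on `ℝ` with density `f` with respect to Lebesgue measure. -/
noncomputable def densMeasure (f : ℝ → ℝ) : Measure ℝ :=
  MeasureTheory.volume.withDensity (fun x => ENNReal.ofReal (f x))

/-- **Converse of the shifting lemma.** If a continuous, even probability density `f`,
positive exactly on `(-b₀, b₀)`, gives rise to a measure with the shifting property,
then the measure is log-concave; equivalently, its isoperimetric function `J` is
concave on `(0,1)`. -/
theorem converse_shifting_lemma
    (f : ℝ → ℝ) (b₀ : ℝ≥0∞) (hb₀ : 0 < b₀)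
    (hf_cont : Continuous f)
    (hf_pos : ∀ x : ℝ, 0 < f x ↔ ENNReal.ofReal |x| < b₀)
    (hf_even : ∀ x : ℝ, f (-x) = f x)
    (hprob : IsProbabilityMeasure (densMeasure f))
    (Finv : ℝ → ℝ)
    (hFinv : ∀ r ∈ Ioo (0:ℝ) 1, (densMeasure f (Iic (Finv r))).toReal = r)
    (J : ℝ → ℝ)
    (hJ : ∀ r ∈ Ioo (0:ℝ) 1, J r = f (Finv r))
    (hshift_right : ∀ a b a' b' : ℝ, a < b → 0 ≤ a + b → a ≤ a' → a' < b' →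
      densMeasure f (Ioo a b) = densMeasure f (Ioo a' b') →
      f a' + f b' ≤ f a + f b)
    (hshift_left : ∀ a b a' b' : ℝ, a < b → a + b ≤ 0 → a' < b' → b' ≤ b →
      densMeasure f (Ioo a b) = densMeasure f (Ioo a' b') →
      f a' + f b' ≤ f a + f b) :
    ConcaveOn ℝ {x : ℝ | 0 < f x} (fun x => Real.log (f x)) ∧
    ConcaveOn ℝ (Ioo (0:ℝ) 1) J := by
  set μ := densMeasure f with hμdef
  haveI : IsProbabilityMeasure μ := hprob
  -- basic measure facts
  have hmeas : Measurable fun x => ENNReal.ofReal (f x) := hf_cont.measurable.ennreal_ofReal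
  have happly : ∀ s : Set ℝ, MeasurableSet s → μ s = ∫⁻ x in s, ENNReal.ofReal (f x) := by
    intro s hs
    rw [hμdef]
    exact withDensity_apply _ hs
  have hfin : ∀ s : Set ℝ, μ s ≠ ⊤ := fun s => (measure_lt_top μ s).ne
  have hsing : ∀ x : ℝ, μ {x} = 0 := by
    intro x
    rw [hμdef]
    exact withDensity_absolutelyContinuous volume _ (Real.volume_singleton)
  have hsplit : ∀ a b : ℝ, a ≤ b → μ (Iic a) + μ (Ioc a b) = μ (Iic b) := by
    intro a b hab
    rw [← measure_union (Iic_disjoint_Ioc le_rfl) measurableSet_Ioc, Iic_union_Ioc_eq_Iic hab]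
  have hIooIoc : ∀ a b : ℝ, μ (Ioo a b) = μ (Ioc a b) := by
    intro a b
    rcases lt_or_ge a b with h | h
    · rw [← Ioo_union_Icc_eq_Ioc h le_rfl, Icc_self]
      rw [measure_union (by simp [Set.disjoint_singleton_right]) (measurableSet_singleton b)]
      rw [hsing, add_zero]
    · rw [Ioo_eq_empty (by exact fun hh => absurd h (not_le.2 hh)), Ioc_eq_empty (not_lt.2 h)]
  have hIicIio : ∀ x : ℝ, μ (Iic x) = μ (Iio x) := by
    intro x
    rw [← Iio_union_right, measure_union (by simp) (measurableSet_singleton x), hsing, add_zero]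
  have hμIicF : ∀ r ∈ Ioo (0:ℝ) 1, μ (Iic (Finv r)) = ENNReal.ofReal r := by
    intro r hr
    rw [← ENNReal.ofReal_toReal (hfin (Iic (Finv r))), hFinv r hr]
  -- monotonicity of F and Finv
  have hFmono : ∀ a b : ℝ, a ≤ b → (μ (Iic a)).toReal ≤ (μ (Iic b)).toReal := by
    intro a b hab
    exact ENNReal.toReal_mono (hfin _) (measure_mono (Iic_subset_Iic.2 hab))
  have hFinvlt : ∀ r s : ℝ, r ∈ Ioo (0:ℝ) 1 → s ∈ Ioo (0:ℝ) 1 → r < s → Finv r < Finv s := by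
    intro r s hr hs hrs
    by_contra hc
    have h1 := hFmono _ _ (not_lt.1 hc)
    rw [hFinv r hr, hFinv s hs] at h1
    linarith
  have hFinvle : ∀ r s : ℝ, r ∈ Ioo (0:ℝ) 1 → s ∈ Ioo (0:ℝ) 1 → r ≤ s → Finv r ≤ Finv s := by
    intro r s hr hs hrs
    rcases eq_or_lt_of_le hrs with h | h
    · rw [h]
    · exact (hFinvlt r s hr hs h).le
  -- measure of Ioo between Finv points
  have hμIoo : ∀ r s : ℝ, r ∈ Ioo (0:ℝ) 1 → s ∈ Ioo (0:ℝ) 1 → r ≤ s →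
      μ (Ioo (Finv r) (Finv s)) = ENNReal.ofReal (s - r) := by
    intro r s hr hs hrs
    rw [hIooIoc]
    have h1 := hsplit (Finv r) (Finv s) (hFinvle r s hr hs hrs)
    rw [hμIicF r hr, hμIicF s hs] at h1
    have h2 : ENNReal.ofReal r + ENNReal.ofReal (s - r) = ENNReal.ofReal s := by
      rw [← ENNReal.ofReal_add hr.1.le (by linarith)]
      congr 1
      ring
    rw [← h2] at h1
    exact (ENNReal.add_right_inj ENNReal.ofReal_ne_top).1 h1
  -- positivity of measure of intervals containing a point of positive density
  have hmp : ∀ a b : ℝ, ∀ c ∈ Ioo a b, 0 < f c → 0 < μ (Ioo a b) := by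
    intro a b c hc hfc
    have h1 : ∀ᶠ y in 𝓝 c, f c / 2 < f y :=
      (hf_cont.tendsto c).eventually (eventually_gt_nhds (by linarith))
    rw [Metric.eventually_nhds_iff] at h1
    obtain ⟨ε, hε, hball⟩ := h1
    set l := max a (c - ε/2) with hl
    set u := min b (c + ε/2) with hu
    have hlc : l < c := max_lt hc.1 (by linarith)
    have hcu : c < u := lt_min hc.2 (by linarith)
    have hsub : Ioo l u ⊆ Ioo a b := fun y hy =>
      ⟨(le_max_left a _).trans_lt hy.1, hy.2.trans_le (min_le_left b _)⟩
    have hballmem : ∀ y ∈ Ioo l u, f c / 2 < f y := by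
      intro y hy
      apply hball
      rw [Real.dist_eq, abs_lt]
      constructor
      · have := hy.1
        have h2 : c - ε/2 ≤ l := le_max_right a _
        linarith
      · have := hy.2
        have h2 : u ≤ c + ε/2 := min_le_right b _
        linarith
    have h2 : ENNReal.ofReal (f c / 2) * volume (Ioo l u) ≤ μ (Ioo l u) := by
      rw [happly _ measurableSet_Ioo, ← setLIntegral_const]
      exact setLIntegral_mono hmeas
        (fun y hy => ENNReal.ofReal_le_ofReal (hballmem y hy).le)
    have h3 : 0 < ENNReal.ofReal (f c / 2) * volume (Ioo l u) := by
      apply ENNReal.mul_pos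
      · simp only [ne_eq, ENNReal.ofReal_eq_zero, not_le]
        linarith
      · rw [Real.volume_Ioo]
        simp only [ne_eq, ENNReal.ofReal_eq_zero, not_le]
        linarith
    exact lt_of_lt_of_le h3 (h2.trans (measure_mono hsub))
  -- near a point of positive density there are points of positive density
  have hnear : ∀ x y : ℝ, x < y → 0 < f x → ∃ c ∈ Ioo x y, 0 < f c := by
    intro x y hxy hfx
    have h1 : ∀ᶠ c in 𝓝[>] x, 0 < f c :=
      eventually_nhdsWithin_of_eventually_nhds
        ((hf_cont.tendsto x).eventually (eventually_gt_nhds hfx))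
    have h2 : ∀ᶠ c in 𝓝[>] x, c ∈ Ioo x y := by
      filter_upwards [Ioo_mem_nhdsGT_of_mem (left_mem_Ico.2 hxy)] with c hc
      exact hc
    obtain ⟨c, hc1, hc2⟩ := (h2.and h1).exists
    exact ⟨c, hc1, hc2⟩
  -- injectivity of F at points of positive density
  have heq : ∀ u v : ℝ, 0 < f u → 0 < f v → μ (Iic u) = μ (Iic v) → u = v := by
    intro u v hfu hfv huv
    rcases lt_trichotomy u v with h | h | h
    · exfalso
      have h1 := hsplit u v h.le
      rw [huv] at h1
      have h2 : μ (Ioc u v) = 0 := by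
        refine (ENNReal.add_right_inj (hfin (Iic v))).1 ?_
        rw [add_zero]
        exact h1
      obtain ⟨c, hc, hfc⟩ := hnear u v h hfu
      have h4 := hmp u v c hc hfc
      rw [hIooIoc] at h4
      exact absurd h2 h4.ne'
    · exact h
    · exfalso
      have h1 := hsplit v u h.le
      rw [huv] at h1
      have h2 : μ (Ioc v u) = 0 := by
        refine (ENNReal.add_right_inj (hfin (Iic v))).1 ?_
        rw [add_zero]
        exact h1
      obtain ⟨c, hc, hfc⟩ := hnear v u h hfv
      have h4 := hmp v u c hc hfc
      rw [hIooIoc] at h4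
      exact absurd h2 h4.ne'
  -- complement sums
  have hcompl : ∀ x : ℝ, μ (Iic x) + μ (Ioi x) = 1 := by
    intro x
    have := measure_add_measure_compl (μ := μ) (measurableSet_Iic (a := x))
    rwa [compl_Iic, measure_univ] at this
  -- positivity of f at Finv points
  have hfpos : ∀ r ∈ Ioo (0:ℝ) 1, 0 < f (Finv r) := by
    intro r hr
    by_contra hc
    have hfx : f (Finv r) ≤ 0 := le_of_not_gt hc
    set x := Finv r with hx
    have hb : ¬ (ENNReal.ofReal |x| < b₀) := fun h => hc ((hf_pos x).2 h)
    rcases le_total 0 x with h0 | h0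
    · have hIoi : μ (Ioi x) = 0 := by
        rw [happly _ measurableSet_Ioi]
        rw [setLIntegral_congr_fun measurableSet_Ioi
          (fun y (hy : x < y) => ?_), lintegral_zero]
        have : ¬ (0 < f y) := by
          intro hfy
          have h2 := (hf_pos y).1 hfy
          apply hb
          refine lt_of_le_of_lt ?_ h2
          apply ENNReal.ofReal_le_ofReal
          rw [abs_of_nonneg h0, abs_of_nonneg (by linarith)]
          exact hy.le
        simp [ENNReal.ofReal_eq_zero.2 (le_of_not_gt this)]
      have h1 := hcompl x
      rw [hIoi, add_zero] at h1
      have h2 := hFinv r hr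
      rw [← hx] at h2
      rw [h1] at h2
      simp at h2
      exact absurd h2.symm (ne_of_lt hr.2)
    · have hIic : μ (Iic x) = 0 := by
        rw [happly _ measurableSet_Iic]
        rw [setLIntegral_congr_fun measurableSet_Iic
          (fun y (hy : y ≤ x) => ?_), lintegral_zero]
        have : ¬ (0 < f y) := by
          intro hfy
          have h2 := (hf_pos y).1 hfy
          apply hb
          refine lt_of_le_of_lt ?_ h2
          apply ENNReal.ofReal_le_ofReal
          rw [abs_of_nonpos h0, abs_of_nonpos (by linarith)]
          linarith
        simp [ENNReal.ofReal_eq_zero.2 (le_of_not_gt this)]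
      have h2 := hFinv r hr
      rw [← hx, hIic] at h2
      simp at h2
      exact absurd h2.symm (ne_of_gt hr.1)
  -- symmetry of the measure
  have hneg : ∀ x : ℝ, μ (Iic (-x)) = μ (Ici x) := by
    intro x
    rw [happly _ measurableSet_Iic, happly _ measurableSet_Ici]
    have hmp' : MeasurePreserving (Neg.neg : ℝ → ℝ) volume volume :=
      Measure.measurePreserving_neg volume
    have hemb : MeasurableEmbedding (Neg.neg : ℝ → ℝ) :=
      (Homeomorph.neg ℝ).measurableEmbedding
    have h1 := hmp'.setLIntegral_comp_preimage_emb hemb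
      (fun y => ENNReal.ofReal (f y)) (Iic (-x))
    have h2 : (Neg.neg : ℝ → ℝ) ⁻¹' (Iic (-x)) = Ici x := by
      ext y
      simp only [mem_preimage, mem_Iic, mem_Ici, neg_le_neg_iff]
    rw [h2] at h1
    rw [← h1]
    apply setLIntegral_congr_fun measurableSet_Ici
    exact (fun y _ => by rw [hf_even])
  have hsum : ∀ x : ℝ, μ (Iic (-x)) + μ (Iic x) = 1 := by
    intro x
    rw [hneg x, hIicIio x]
    have := measure_add_measure_compl (μ := μ) (measurableSet_Ici (a := x))
    rwa [compl_Ici, measure_univ] at this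
  -- symmetry of Finv
  have h1mem : ∀ r ∈ Ioo (0:ℝ) 1, 1 - r ∈ Ioo (0:ℝ) 1 := by
    intro r hr
    exact ⟨by linarith [hr.2], by linarith [hr.1]⟩
  have hFinvneg : ∀ r ∈ Ioo (0:ℝ) 1, Finv (1 - r) = - Finv r := by
    intro r hr
    have h1 : μ (Iic (- Finv r)) + ENNReal.ofReal r = 1 := by
      have := hsum (Finv r)
      rwa [hμIicF r hr] at this
    have h2 : ENNReal.ofReal (1 - r) + ENNReal.ofReal r = 1 := by
      rw [← ENNReal.ofReal_add (by linarith [hr.2]) hr.1.le]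
      norm_num
    have h3 : μ (Iic (- Finv r)) = ENNReal.ofReal (1 - r) := by
      refine (ENNReal.add_left_inj (a := ENNReal.ofReal r) ENNReal.ofReal_ne_top).1 ?_
      rw [h1, h2]
    apply heq
    · exact hfpos (1 - r) (h1mem r hr)
    · rw [hf_even]
      exact hfpos r hr
    · rw [hμIicF (1 - r) (h1mem r hr), h3]
  -- left version of hnear
  have hnear' : ∀ x y : ℝ, y < x → 0 < f x → ∃ c ∈ Ioo y x, 0 < f c := by
    intro x y hxy hfx
    have h1 : ∀ᶠ c in 𝓝[<] x, 0 < f c :=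
      eventually_nhdsWithin_of_eventually_nhds
        ((hf_cont.tendsto x).eventually (eventually_gt_nhds hfx))
    have h2 : ∀ᶠ c in 𝓝[<] x, c ∈ Ioo y x := by
      filter_upwards [Ioo_mem_nhdsLT_of_mem (right_mem_Ioc.2 hxy)] with c hc
      exact hc
    obtain ⟨c, hc1, hc2⟩ := (h2.and h1).exists
    exact ⟨c, hc1, hc2⟩
  -- continuity of Finv
  have hFinvContAt : ∀ r ∈ Ioo (0:ℝ) 1, ContinuousAt Finv r := by
    intro r hr
    have hfx : 0 < f (Finv r) := hfpos r hr
    have : Tendsto Finv (𝓝 r) (𝓝 (Finv r)) := by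
      rw [tendsto_order]
      constructor
      · intro l hl
        obtain ⟨c, hc, hfc⟩ := hnear' (Finv r) (max l (Finv r - 1))
          (max_lt hl (by linarith)) hfx
        have hlc : l < c := lt_of_le_of_lt (le_max_left l _) hc.1
        obtain ⟨c', hc', hfc'⟩ := hnear c (Finv r) hc.2 hfc
        have hμpos := hmp c (Finv r) c' hc' hfc'
        have hFc : (μ (Iic c)).toReal < r := by
          have hs := hsplit c (Finv r) hc.2.le
          rw [hμIicF r hr] at hs
          have ht : ((μ (Iic c)) + μ (Ioc c (Finv r))).toReal = r := by
            rw [hs, ENNReal.toReal_ofReal hr.1.le]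
          rw [ENNReal.toReal_add (hfin _) (hfin _)] at ht
          have hpos : 0 < (μ (Ioc c (Finv r))).toReal := by
            apply ENNReal.toReal_pos _ (hfin _)
            rw [← hIooIoc]
            exact hμpos.ne'
          linarith
        filter_upwards [isOpen_Ioo.mem_nhds
            (show r ∈ Ioo ((μ (Iic c)).toReal) 1 from ⟨hFc, hr.2⟩),
          isOpen_Ioo.mem_nhds hr] with r' h1 h2
        by_contra hcon
        have h3 : Finv r' ≤ c := le_trans (not_lt.1 hcon) hlc.le
        have h4 := hFmono _ _ h3
        rw [hFinv r' h2] at h4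
        linarith [h1.1]
      · intro u hu
        obtain ⟨c, hc, hfc⟩ := hnear (Finv r) (min u (Finv r + 1))
          (lt_min hu (by linarith)) hfx
        have hcu : c < u := lt_of_lt_of_le hc.2 (min_le_left u _)
        obtain ⟨c', hc', hfc'⟩ := hnear' c (Finv r) hc.1 hfc
        have hμpos := hmp (Finv r) c c' hc' hfc'
        have hFc : r < (μ (Iic c)).toReal := by
          have hs := hsplit (Finv r) c hc.1.le
          rw [hμIicF r hr] at hs
          have ht : (μ (Iic c)).toReal
              = (ENNReal.ofReal r + μ (Ioc (Finv r) c)).toReal := by rw [hs]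
          rw [ENNReal.toReal_add ENNReal.ofReal_ne_top (hfin _),
            ENNReal.toReal_ofReal hr.1.le] at ht
          have hpos : 0 < (μ (Ioc (Finv r) c)).toReal := by
            apply ENNReal.toReal_pos _ (hfin _)
            rw [← hIooIoc]
            exact hμpos.ne'
          linarith
        filter_upwards [isOpen_Ioo.mem_nhds
            (show r ∈ Ioo (0:ℝ) ((μ (Iic c)).toReal) from ⟨hr.1, hFc⟩),
          isOpen_Ioo.mem_nhds hr] with r' h1 h2
        by_contra hcon
        have h3 : c ≤ Finv r' := le_trans hcu.le (not_lt.1 hcon)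
        have h4 := hFmono _ _ h3
        rw [hFinv r' h2] at h4
        linarith [h1.2]
    exact this
  have hFinvcont : ContinuousOn Finv (Ioo 0 1) :=
    fun r hr => (hFinvContAt r hr).continuousWithinAt
  have hJcont : ContinuousOn J (Ioo 0 1) := by
    apply ContinuousOn.congr (hf_cont.comp_continuousOn hFinvcont)
    intro r hr
    exact hJ r hr
  have hJpos : ∀ r ∈ Ioo (0:ℝ) 1, 0 < J r := by
    intro r hr
    rw [hJ r hr]
    exact hfpos r hr
  have hJsymm : ∀ r ∈ Ioo (0:ℝ) 1, J (1 - r) = J r := by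
    intro r hr
    rw [hJ (1-r) (h1mem r hr), hJ r hr, hFinvneg r hr, hf_even]
  -- the basic shifting step in J coordinates
  have hstep : ∀ p t t' : ℝ, 0 < p → 0 < t → t ≤ t' → 2*t' + p ≤ 1 → t' + p < 1 →
      J t + J (t+p) ≤ J t' + J (t'+p) := by
    intro p t t' hp ht htt' h2tp htp1
    rcases eq_or_lt_of_le htt' with h | h
    · rw [h]
    · have hmt : t ∈ Ioo (0:ℝ) 1 := ⟨ht, by linarith⟩
      have hmtp : t + p ∈ Ioo (0:ℝ) 1 := ⟨by linarith, by linarith⟩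
      have hmt' : t' ∈ Ioo (0:ℝ) 1 := ⟨by linarith, by linarith⟩
      have hmtp' : t' + p ∈ Ioo (0:ℝ) 1 := ⟨by linarith, htp1⟩
      have hab : Finv t' < Finv (t'+p) := hFinvlt _ _ hmt' hmtp' (by linarith)
      have ha'b' : Finv t < Finv (t+p) := hFinvlt _ _ hmt hmtp (by linarith)
      have hb'b : Finv (t+p) ≤ Finv (t'+p) := hFinvle _ _ hmtp hmtp' (by linarith)
      have hsum0 : Finv t' + Finv (t'+p) ≤ 0 := by
        have h1 : Finv (t'+p) ≤ Finv (1 - t') :=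
          hFinvle _ _ hmtp' (h1mem t' hmt') (by linarith)
        rw [hFinvneg t' hmt'] at h1
        linarith
      have hmeq : μ (Ioo (Finv t') (Finv (t'+p))) = μ (Ioo (Finv t) (Finv (t+p))) := by
        rw [hμIoo t' (t'+p) hmt' hmtp' (by linarith), hμIoo t (t+p) hmt hmtp (by linarith)]
        norm_num
      have := hshift_left (Finv t') (Finv (t'+p)) (Finv t) (Finv (t+p))
        hab hsum0 ha'b' hb'b hmeq
      rw [hJ t hmt, hJ (t+p) hmtp, hJ t' hmt', hJ (t'+p) hmtp']
      linarith
  -- monotonicity of J on the left half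
  have hmono0 : ∀ ρ σ : ℝ, ρ ∈ Ioo (0:ℝ) 1 → σ ∈ Ioo (0:ℝ) 1 → ρ < σ → 2*σ < 1 →
      J ρ ≤ J σ := by
    intro ρ σ hρ hσ hρσ h2σ
    have hev : ∀ᶠ p in 𝓝[>] (0:ℝ), J ρ + J (ρ + p) ≤ J σ + J (σ + p) := by
      filter_upwards [Ioo_mem_nhdsGT_of_mem
        (left_mem_Ico.2 (show (0:ℝ) < 1 - 2*σ by linarith))] with p hp
      exact hstep p ρ σ hp.1 hρ.1 hρσ.le (by linarith [hp.2]) (by linarith [hp.2, hσ.1])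
    have hcρ : ContinuousAt J ρ := hJcont.continuousAt (isOpen_Ioo.mem_nhds hρ)
    have hcσ : ContinuousAt J σ := hJcont.continuousAt (isOpen_Ioo.mem_nhds hσ)
    have htρ : Tendsto (fun p : ℝ => J ρ + J (ρ + p)) (𝓝[>] 0) (𝓝 (J ρ + J ρ)) := by
      apply Tendsto.const_add
      have h1 : Tendsto (fun p : ℝ => ρ + p) (𝓝 (0:ℝ)) (𝓝 ρ) := by
        have := (continuous_add_left ρ).tendsto (0:ℝ)
        rwa [add_zero] at this
      exact (hcρ.tendsto.comp h1).mono_left nhdsWithin_le_nhds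
    have htσ : Tendsto (fun p : ℝ => J σ + J (σ + p)) (𝓝[>] 0) (𝓝 (J σ + J σ)) := by
      apply Tendsto.const_add
      have h1 : Tendsto (fun p : ℝ => σ + p) (𝓝 (0:ℝ)) (𝓝 σ) := by
        have := (continuous_add_left σ).tendsto (0:ℝ)
        rwa [add_zero] at this
      exact (hcσ.tendsto.comp h1).mono_left nhdsWithin_le_nhds
    have := le_of_tendsto_of_tendsto htρ htσ hev
    linarith
  have hmono : ∀ ρ σ : ℝ, ρ ∈ Ioo (0:ℝ) 1 → σ ∈ Ioo (0:ℝ) 1 → ρ < σ → 2*σ ≤ 1 →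
      J ρ ≤ J σ := by
    intro ρ σ hρ hσ hρσ h2σ
    rcases lt_or_eq_of_le h2σ with h | h
    · exact hmono0 ρ σ hρ hσ hρσ h
    · have hσhalf : σ = 1/2 := by linarith
      subst hσhalf
      have hev : ∀ᶠ σ' in 𝓝[<] (1/2:ℝ), J ρ ≤ J σ' := by
        filter_upwards [Ioo_mem_nhdsLT_of_mem
          (right_mem_Ioc.2 (show ρ < 1/2 by linarith))] with σ' hσ'
        exact hmono0 ρ σ' hρ ⟨by linarith [hρ.1, hσ'.1], by linarith [hσ'.2]⟩ hσ'.1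
          (by linarith [hσ'.2])
      have hcσ : ContinuousAt J (1/2:ℝ) :=
        hJcont.continuousAt (isOpen_Ioo.mem_nhds (by norm_num))
      exact ge_of_tendsto (hcσ.continuousWithinAt.tendsto) hev
  have hincA : ∀ a b c d : ℝ, a ∈ Ioo (0:ℝ) 1 → d ∈ Ioo (0:ℝ) 1 → a < b → b ≤ c → c < d →
      b - a = d - c → a + d ≤ 1 → J a + J d ≤ J b + J c := by
    intro a b c d ha hd hab hbc hcd hlen hsum
    have hb : b ∈ Ioo (0:ℝ) 1 := ⟨by linarith [ha.1], by linarith [hd.2]⟩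
    have hc : c ∈ Ioo (0:ℝ) 1 := ⟨by linarith [ha.1], by linarith [hd.2]⟩
    rcases eq_or_lt_of_le hsum with he | hlt
    · have hd1 : d = 1 - a := by linarith
      have hc1 : c = 1 - b := by linarith
      have h1 : J d = J a := by rw [hd1]; exact hJsymm a ha
      have h2 : J c = J b := by rw [hc1]; exact hJsymm b hb
      rw [h1, h2]
      have h3 : J a ≤ J b := hmono a b ha hb hab (by linarith)
      linarith
    · set p := 1 - d - a with hp
      have hp0 : 0 < p := by linarith
      have h1 := hstep p a b hp0 ha.1 hab.le (by linarith) (by linarith [hd.1, ha.1])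
      have e1 : a + p = 1 - d := by rw [hp]; ring
      have e2 : b + p = 1 - c := by rw [hp]; linarith
      rw [e1, e2, hJsymm d hd, hJsymm c hc] at h1
      exact h1
  have hinc : ∀ a b c d : ℝ, a ∈ Ioo (0:ℝ) 1 → d ∈ Ioo (0:ℝ) 1 → a < b → b ≤ c → c < d →
      b - a = d - c → J a + J d ≤ J b + J c := by
    intro a b c d ha hd hab hbc hcd hlen
    have hb : b ∈ Ioo (0:ℝ) 1 := ⟨by linarith [ha.1], by linarith [hd.2]⟩
    have hc : c ∈ Ioo (0:ℝ) 1 := ⟨by linarith [ha.1], by linarith [hd.2]⟩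
    rcases le_or_gt (a + d) 1 with h | h
    · exact hincA a b c d ha hd hab hbc hcd hlen h
    · have h1 := hincA (1-d) (1-c) (1-b) (1-a) (h1mem d hd) (h1mem a ha)
        (by linarith) (by linarith) (by linarith) (by linarith) (by linarith)
      rw [hJsymm d hd, hJsymm c hc, hJsymm b hb, hJsymm a ha] at h1
      linarith
  have hJconc : ConcaveOn ℝ (Ioo 0 1) J := concaveOn_of_increments J hJcont hinc
  -- Part 1 : log-concavity of f
  set g₀ : ℝ → ℝ := fun t => max (f t) 0 with hg₀def
  have hg₀nonneg : ∀ t, 0 ≤ g₀ t := fun t => le_max_right _ _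
  have hg₀cont : Continuous g₀ := hf_cont.max continuous_const
  have hofReal : ∀ t, ENNReal.ofReal (f t) = ENNReal.ofReal (g₀ t) := by
    intro t
    show ENNReal.ofReal (f t) = ENNReal.ofReal (max (f t) 0)
    rcases le_total (f t) 0 with h | h
    · rw [max_eq_right h, ENNReal.ofReal_zero, ENNReal.ofReal_eq_zero.2 h]
    · rw [max_eq_left h]
  have happly' : ∀ s : Set ℝ, MeasurableSet s → μ s = ∫⁻ x in s, ENNReal.ofReal (g₀ x) := by
    intro s hs
    rw [happly s hs]
    exact lintegral_congr (fun t => hofReal t)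
  have hg₀lint : ∫⁻ t, ENNReal.ofReal (g₀ t) = 1 := by
    have := happly' univ MeasurableSet.univ
    rw [setLIntegral_univ] at this
    rw [← this, measure_univ]
  have hg₀int : Integrable g₀ volume := by
    constructor
    · exact hg₀cont.aestronglyMeasurable
    · rw [hasFiniteIntegral_iff_ofReal (ae_of_all _ hg₀nonneg), hg₀lint]
      exact ENNReal.one_lt_top
  have hFtoInt : ∀ x : ℝ, (μ (Iic x)).toReal = ∫ t in Iic x, g₀ t := by
    intro x
    rw [happly' _ measurableSet_Iic]
    rw [← integral_toReal ((hg₀cont.measurable.ennreal_ofReal).aemeasurable)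
      (ae_of_all _ (fun t => ENNReal.ofReal_lt_top))]
    apply integral_congr_ae
    exact ae_of_all _ (fun t => ENNReal.toReal_ofReal (hg₀nonneg t))
  have hFder : ∀ x : ℝ, HasDerivAt (fun y => (μ (Iic y)).toReal) (g₀ x) x := by
    intro x
    have hkey : (fun y => (μ (Iic y)).toReal)
        = fun y => (μ (Iic (0:ℝ))).toReal + ∫ t in (0:ℝ)..y, g₀ t := by
      funext y
      rw [hFtoInt y, hFtoInt 0]
      have := intervalIntegral.integral_Iic_sub_Iic
        (hg₀int.integrableOn) (hg₀int.integrableOn) (a := (0:ℝ)) (b := y)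
      linarith
    rw [hkey]
    exact (intervalIntegral.integral_hasDerivAt_right
      (hg₀int.intervalIntegrable)
      (hg₀cont.stronglyMeasurable.stronglyMeasurableAtFilter)
      hg₀cont.continuousAt).const_add _
  -- F maps the support into (0,1) and Finv inverts it
  have hFmem : ∀ x : ℝ, 0 < f x → (μ (Iic x)).toReal ∈ Ioo (0:ℝ) 1 := by
    intro x hfx
    constructor
    · obtain ⟨c, hc, hfc⟩ := hnear' x (x - 1) (by linarith) hfx
      have h1 := hmp (x-1) x c hc hfc
      have h2 : μ (Ioo (x-1) x) ≤ μ (Iic x) := measure_mono (fun y hy => le_of_lt hy.2)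
      exact ENNReal.toReal_pos (lt_of_lt_of_le h1 h2).ne' (hfin _)
    · obtain ⟨c, hc, hfc⟩ := hnear x (x + 1) (by linarith) hfx
      have h1 := hmp x (x+1) c hc hfc
      have h2 : μ (Ioo x (x+1)) ≤ μ (Ioi x) := measure_mono (fun y hy => hy.1)
      have h3 : μ (Iic x) ≠ 1 := by
        intro hone
        have h4 := hcompl x
        rw [hone] at h4
        have h5 : μ (Ioi x) = 0 := by
          refine (ENNReal.add_right_inj (ENNReal.one_ne_top)).1 ?_
          rw [add_zero]
          exact h4
        have h6 := lt_of_lt_of_le h1 h2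
        rw [h5] at h6
        exact lt_irrefl _ h6
      have h6 : μ (Iic x) < 1 := lt_of_le_of_ne prob_le_one h3
      have := ENNReal.toReal_lt_toReal (hfin _) (ENNReal.one_ne_top) |>.2 h6
      simpa using this
  have hFinvF : ∀ x : ℝ, 0 < f x → Finv ((μ (Iic x)).toReal) = x := by
    intro x hfx
    apply heq _ _ (hfpos _ (hFmem x hfx)) hfx
    rw [hμIicF _ (hFmem x hfx), ENNReal.ofReal_toReal (hfin _)]
  -- derivative of Finv
  have hFinvder : ∀ r ∈ Ioo (0:ℝ) 1, HasDerivAt Finv ((J r)⁻¹) r := by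
    intro r hr
    have h1 : HasDerivAt (fun y => (μ (Iic y)).toReal) (J r) (Finv r) := by
      have := hFder (Finv r)
      have h2 : g₀ (Finv r) = J r := by
        rw [hg₀def, hJ r hr]
        exact max_eq_left (hfpos r hr).le
      rwa [h2] at this
    apply HasDerivAt.of_local_left_inverse (hFinvContAt r hr) h1 (hJpos r hr).ne'
    filter_upwards [isOpen_Ioo.mem_nhds hr] with y hy
    exact hFinv y hy
  -- fundamental theorem for Finv
  have hFTC : ∀ r q : ℝ, r ∈ Ioo (0:ℝ) 1 → q ∈ Ioo (0:ℝ) 1 → r < q →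
      ∫ u in r..q, (J u)⁻¹ = Finv q - Finv r := by
    intro r q hr hq hrq
    apply intervalIntegral.integral_eq_sub_of_hasDerivAt
    · intro u hu
      rw [uIcc_of_le hrq.le] at hu
      exact hFinvder u ⟨hr.1.trans_le hu.1, lt_of_le_of_lt hu.2 hq.2⟩
    · apply ContinuousOn.intervalIntegrable
      rw [uIcc_of_le hrq.le]
      have hsub : Icc r q ⊆ Ioo (0:ℝ) 1 :=
        fun u hu => ⟨hr.1.trans_le hu.1, lt_of_le_of_lt hu.2 hq.2⟩
      exact ((hJcont.mono hsub).inv₀ (fun u hu => (hJpos u (hsub hu)).ne'))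
  -- strict monotonicity of F at support points
  have hFstrict : ∀ x y : ℝ, x < y → 0 < f x →
      (μ (Iic x)).toReal < (μ (Iic y)).toReal := by
    intro x y hxy hfx
    obtain ⟨c, hc, hfc⟩ := hnear x y hxy hfx
    have h1 := hmp x y c hc hfc
    rw [hIooIoc] at h1
    have h2 := hsplit x y hxy.le
    rw [← h2, ENNReal.toReal_add (hfin _) (hfin _)]
    have := ENNReal.toReal_pos h1.ne' (hfin _)
    linarith
  -- convexity of the support
  have hSconv : Convex ℝ {x : ℝ | 0 < f x} := by
    intro x hx y hy a b ha hb hab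
    simp only [mem_setOf_eq] at hx hy ⊢
    rw [hf_pos] at hx hy ⊢
    have h1 : |a • x + b • y| ≤ max |x| |y| := by
      simp only [smul_eq_mul]
      calc |a*x + b*y| ≤ |a*x| + |b*y| := abs_add_le _ _
        _ = a*|x| + b*|y| := by rw [abs_mul, abs_mul, abs_of_nonneg ha, abs_of_nonneg hb]
        _ ≤ a * max |x| |y| + b * max |x| |y| := by
            gcongr
            · exact le_max_left _ _
            · exact le_max_right _ _
        _ = max |x| |y| := by rw [← add_mul, hab, one_mul]
    calc ENNReal.ofReal |a • x + b • y| ≤ ENNReal.ofReal (max |x| |y|) :=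
          ENNReal.ofReal_le_ofReal h1
      _ = max (ENNReal.ofReal |x|) (ENNReal.ofReal |y|) :=
          Monotone.map_max (fun _ _ h => ENNReal.ofReal_le_ofReal h)
      _ < b₀ := max_lt hx hy
  -- the slope inequality for log ∘ f
  have hpart1 : ConcaveOn ℝ {x : ℝ | 0 < f x} (fun x => Real.log (f x)) := by
    apply concaveOn_of_slope_anti_adjacent hSconv
    intro x y z hx hz hxy hyz
    simp only [mem_setOf_eq] at hx hz
    have hy : 0 < f y := by
      have h1 : y ∈ segment ℝ x z := by
        rw [segment_eq_Icc (by linarith : x ≤ z)]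
        exact ⟨hxy.le, hyz.le⟩
      have := hSconv.segment_subset hx hz h1
      simpa using this
    set r := (μ (Iic x)).toReal with hrdef
    set q := (μ (Iic y)).toReal with hqdef
    set t := (μ (Iic z)).toReal with htdef
    have hr : r ∈ Ioo (0:ℝ) 1 := hFmem x hx
    have hq : q ∈ Ioo (0:ℝ) 1 := hFmem y hy
    have ht : t ∈ Ioo (0:ℝ) 1 := hFmem z hz
    have hrq : r < q := hFstrict x y hxy hx
    have hqt : q < t := hFstrict y z hyz hy
    have hcore := slope_core hJconc hJpos hr ht hrq hqt
    have hJr : J r = f x := by rw [hJ r hr, hrdef, hFinvF x hx]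
    have hJq : J q = f y := by rw [hJ q hq, hqdef, hFinvF y hy]
    have hJt : J t = f z := by rw [hJ t ht, htdef, hFinvF z hz]
    have hl1 : (∫ u in r..q, (J u)⁻¹) = y - x := by
      rw [hFTC r q hr hq hrq, hqdef, hrdef, hFinvF x hx, hFinvF y hy]
    have hl2 : (∫ u in q..t, (J u)⁻¹) = z - y := by
      rw [hFTC q t hq ht hqt, htdef, hqdef, hFinvF y hy, hFinvF z hz]
    rw [hJr, hJq, hJt, hl1, hl2] at hcore
    rw [div_le_div_iff₀ (by linarith) (by linarith)]
    linarith
  exact ⟨hpart1, hJconc⟩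
end

section
/- Let r, λ be reals with 0 < r ≤ 1/2 and 0 < λ ≤ min(2r, 1 − r). Then the connected set Ω_c = (F⁻¹(λ/2), F⁻¹(r + λ/2)) satisfies μ(Ω_c) = r and λ(Ω_c) = λ. -/
open MeasureTheory Set Filter Topology
open scoped ENNReal

/-- The essential boundary of a set `Ω ⊆ ℝ`: points whose Lebesgue density in `Ω`
is neither `0` nor `1`. -/
def essBoundary (Ω : Set ℝ) : Set ℝ :=
  {x : ℝ |
    ¬ Tendsto (fun ρ : ℝ => (MeasureTheory.volume (Ω ∩ Ioo (x - ρ) (x + ρ))).toReal / (2 * ρ))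
        (nhdsWithin 0 (Ioi 0)) (nhds 0) ∧
    ¬ Tendsto (fun ρ : ℝ => (MeasureTheory.volume (Ω ∩ Ioo (x - ρ) (x + ρ))).toReal / (2 * ρ))
        (nhdsWithin 0 (Ioi 0)) (nhds 1)}

/-- The `μ`-perimeter of `Ω`: the integral of the density `f` over the essential boundary
of `Ω` with respect to the 0-dimensional Hausdorff (counting) measure. -/
noncomputable def perim (f : ℝ → ℝ) (Ω : Set ℝ) : ℝ≥0∞ :=
  ∫⁻ x in essBoundary Ω, ENNReal.ofReal (f x) ∂Measure.count

/-- The setup of the paper: an even, log-concave probability density `f` on `ℝ`,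
positive exactly on the symmetric interval `(-b₀, b₀)` (with `b₀ ∈ (0, ∞]`),
together with the inverse `Finv` of the cumulative distribution function on `(0,1)`
and the isoperimetric function `J` given by `J r = f (Finv r)` on `(0,1)`,
`J 0 = J 1 = 0`. -/
structure LogConcaveSetup where
  f : ℝ → ℝ
  b₀ : ℝ≥0∞
  hb₀ : 0 < b₀
  hf_meas : Measurable f
  hf_pos : ∀ x : ℝ, 0 < f x ↔ ENNReal.ofReal |x| < b₀
  hf_even : ∀ x : ℝ, f (-x) = f x
  hf_logConcave : ConcaveOn ℝ {x : ℝ | 0 < f x} (fun x => Real.log (f x))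
  hprob : IsProbabilityMeasure (densMeasure f)
  Finv : ℝ → ℝ
  hFinv : ∀ r ∈ Ioo (0:ℝ) 1, (densMeasure f (Iic (Finv r))).toReal = r
  J : ℝ → ℝ
  hJ : ∀ r ∈ Ioo (0:ℝ) 1, J r = f (Finv r)
  hJ0 : J 0 = 0
  hJ1 : J 1 = 0

/-- The asymmetry `λ(Ω)`: the minimum of the `μ`-measures of the symmetric differences
of `Ω` with the two half-lines of the same `μ`-measure as `Ω`. -/
noncomputable def asym (S : LogConcaveSetup) (Ω : Set ℝ) : ℝ :=
  min ((densMeasure S.f (symmDiff Ω (Iio (S.Finv ((densMeasure S.f Ω).toReal))))).toReal)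
      ((densMeasure S.f (symmDiff Ω (Ioi (S.Finv (1 - (densMeasure S.f Ω).toReal))))).toReal)

section Aux
variable (μ : Measure ℝ) [IsProbabilityMeasure μ] [NullSingletonClass μ]

lemma auxIio (x : ℝ) : μ (Iio x) = μ (Iic x) := measure_congr Iio_ae_eq_Iic

lemma auxIoo (x y : ℝ) : μ (Ioo x y) = μ (Iic y) - μ (Iic x) := by
  rcases le_or_gt y x with h | h
  · rw [Ioo_eq_empty (not_lt.mpr h), measure_empty, eq_comm, tsub_eq_zero_iff_le]
    exact measure_mono (Iic_subset_Iic.mpr h)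
  · rw [← Iio_sdiff_Iic, measure_diff (Iic_subset_Iio.mpr h) measurableSet_Iic.nullMeasurableSet
        (measure_ne_top μ _), auxIio]

lemma auxIco (x y : ℝ) : μ (Ico x y) = μ (Iic y) - μ (Iic x) := by
  rw [← measure_congr (Ioo_ae_eq_Ico (μ := μ) (a := x) (b := y)), auxIoo]

lemma auxIoc (x y : ℝ) : μ (Ioc x y) = μ (Iic y) - μ (Iic x) := by
  rw [← measure_congr (Ioo_ae_eq_Ioc (μ := μ) (a := x) (b := y)), auxIoo]

lemma auxIci (x : ℝ) : μ (Ici x) = 1 - μ (Iic x) := by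
  rw [← compl_Iio, measure_compl measurableSet_Iio (measure_ne_top μ _), measure_univ, auxIio]

lemma auxIoi (x : ℝ) : μ (Ioi x) = 1 - μ (Iic x) := by
  rw [← compl_Iic, measure_compl measurableSet_Iic (measure_ne_top μ _), measure_univ]

lemma pieceA (a b c : ℝ) :
    μ (Ioo a b \ Iio c) = μ (Iic b) - max (μ (Iic a)) (μ (Iic c)) := by
  rcases le_or_gt c a with h | h
  · rw [show Ioo a b \ Iio c = Ioo a b by
        ext z; simp only [mem_diff, mem_Ioo, mem_Iio, not_lt]
        exact ⟨fun hz => hz.1, fun hz => ⟨hz, h.trans hz.1.le⟩⟩,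
      auxIoo, max_eq_left (measure_mono (Iic_subset_Iic.mpr h))]
  · rw [show Ioo a b \ Iio c = Ico c b by
        ext z; simp only [mem_diff, mem_Ioo, mem_Iio, mem_Ico, not_lt]
        exact ⟨fun hz => ⟨hz.2, hz.1.2⟩, fun hz => ⟨⟨h.trans_le hz.1, hz.2⟩, hz.1⟩⟩,
      auxIco, max_eq_right (measure_mono (Iic_subset_Iic.mpr h.le))]

lemma pieceB (a b c : ℝ) (hab : a < b) :
    μ (Iio c \ Ioo a b) = min (μ (Iic a)) (μ (Iic c)) + (μ (Iic c) - μ (Iic b)) := by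
  have hset : Iio c \ Ioo a b = (Iio c ∩ Iic a) ∪ (Ico b c) := by
    ext z
    simp only [mem_diff, mem_Iio, mem_Ioo, mem_union, mem_inter_iff, mem_Iic, mem_Ico, not_and,
      not_lt]
    constructor
    · rintro ⟨h1, h2⟩
      rcases le_or_gt z a with h | h
      · exact Or.inl ⟨h1, h⟩
      · exact Or.inr ⟨h2 h, h1⟩
    · rintro (⟨h1, h2⟩ | ⟨h1, h2⟩)
      · exact ⟨h1, fun h => absurd (h2.trans_lt h) (lt_irrefl z)⟩
      · exact ⟨h2, fun _ => h1⟩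
  rw [hset, measure_union ?hdis measurableSet_Ico, auxIco]
  · congr 1
    rcases le_or_gt c a with h | h
    · rw [show Iio c ∩ Iic a = Iio c from inter_eq_left.mpr
          (fun z (hz : z ∈ Iio c) => le_of_lt (lt_of_lt_of_le hz h)), auxIio,
        min_eq_right (measure_mono (Iic_subset_Iic.mpr h))]
    · rw [show Iio c ∩ Iic a = Iic a from inter_eq_right.mpr
          (fun z (hz : z ∈ Iic a) => lt_of_le_of_lt hz h),
        min_eq_left (measure_mono (Iic_subset_Iic.mpr h.le))]
  · case hdis =>
      refine Set.disjoint_left.mpr ?_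
      rintro z ⟨_, hz2⟩ ⟨hz3, _⟩
      exact absurd ((hab.trans_le hz3).trans_le hz2) (lt_irrefl a)

lemma pieceC (a b d : ℝ) :
    μ (Ioo a b \ Ioi d) = min (μ (Iic b)) (μ (Iic d)) - μ (Iic a) := by
  rcases le_or_gt b d with h | h
  · rw [show Ioo a b \ Ioi d = Ioo a b by
        ext z; simp only [mem_diff, mem_Ioo, mem_Ioi, not_lt]
        exact ⟨fun hz => hz.1, fun hz => ⟨hz, hz.2.le.trans h⟩⟩,
      auxIoo, min_eq_left (measure_mono (Iic_subset_Iic.mpr h))]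
  · rw [show Ioo a b \ Ioi d = Ioc a d by
        ext z; simp only [mem_diff, mem_Ioo, mem_Ioi, mem_Ioc, not_lt]
        exact ⟨fun hz => ⟨hz.1.1, hz.2⟩, fun hz => ⟨⟨hz.1, hz.2.trans_lt h⟩, hz.2⟩⟩,
      auxIoc, min_eq_right (measure_mono (Iic_subset_Iic.mpr h.le))]

lemma pieceD (a b d : ℝ) (hab : a < b) :
    μ (Ioi d \ Ioo a b) =
      (μ (Iic a) - μ (Iic d)) + (1 - max (μ (Iic b)) (μ (Iic d))) := by
  have hset : Ioi d \ Ioo a b = (Ioc d a) ∪ (Ioi d ∩ Ici b) := by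
    ext z
    simp only [mem_diff, mem_Ioi, mem_Ioo, mem_union, mem_Ioc, mem_inter_iff, mem_Ici, not_and,
      not_lt]
    constructor
    · rintro ⟨h1, h2⟩
      rcases le_or_gt z a with h | h
      · exact Or.inl ⟨h1, h⟩
      · exact Or.inr ⟨h1, h2 h⟩
    · rintro (⟨h1, h2⟩ | ⟨h1, h2⟩)
      · exact ⟨h1, fun h => absurd (h.trans_le h2) (lt_irrefl a)⟩
      · exact ⟨h1, fun _ => h2⟩
  rw [hset, measure_union ?hdis (measurableSet_Ioi.inter measurableSet_Ici), auxIoc]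
  · congr 1
    rcases le_or_gt b d with h | h
    · rw [show Ioi d ∩ Ici b = Ioi d from inter_eq_left.mpr
          (fun z (hz : z ∈ Ioi d) => le_of_lt (lt_of_le_of_lt h hz)), auxIoi,
        max_eq_right (measure_mono (Iic_subset_Iic.mpr h))]
    · rw [show Ioi d ∩ Ici b = Ici b from inter_eq_right.mpr
          (fun z (hz : z ∈ Ici b) => lt_of_lt_of_le h hz), auxIci,
        max_eq_left (measure_mono (Iic_subset_Iic.mpr h.le))]
  · case hdis =>
      refine Set.disjoint_left.mpr ?_
      rintro z ⟨_, hz2⟩ ⟨_, hz4⟩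
      exact absurd ((hab.trans_le hz4).trans_le hz2) (lt_irrefl a)

end Aux

/-- The connected competitor `Ω_c = (F⁻¹(λ/2), F⁻¹(r + λ/2))` has `μ`-measure `r`
and asymmetry `λ`, whenever `0 < r ≤ 1/2` and `0 < λ ≤ min (2r) (1-r)`. -/


theorem omega_c_measure_asym (S : LogConcaveSetup) (r lam : ℝ)
    (hr0 : 0 < r) (hr : r ≤ 1 / 2)
    (hl0 : 0 < lam) (hl : lam ≤ min (2 * r) (1 - r)) :
    (densMeasure S.f (Ioo (S.Finv (lam / 2)) (S.Finv (r + lam / 2)))).toReal = r ∧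
    asym S (Ioo (S.Finv (lam / 2)) (S.Finv (r + lam / 2))) = lam := by
  have hlam2r : lam ≤ 2 * r := (le_min_iff.mp hl).1
  have hlam1r : lam ≤ 1 - r := (le_min_iff.mp hl).2
  set μ := densMeasure S.f with hμdef
  haveI hP : IsProbabilityMeasure μ := S.hprob
  haveI : NullSingletonClass μ := by
    refine ⟨fun x => ?_⟩
    rw [hμdef, densMeasure, withDensity_apply _ (measurableSet_singleton x)]
    exact setLIntegral_measure_zero _ _ (measure_singleton x)
  have hF : ∀ s : ℝ, 0 < s → s < 1 → μ (Iic (S.Finv s)) = ENNReal.ofReal s := fun s h1 h2 => by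
    have h3 := S.hFinv s ⟨h1, h2⟩
    conv_rhs => rw [← h3]
    rw [ENNReal.ofReal_toReal (measure_ne_top _ _)]
  set a := S.Finv (lam / 2)
  set b := S.Finv (r + lam / 2)
  set c := S.Finv r
  set d := S.Finv (1 - r)
  have ha : μ (Iic a) = ENNReal.ofReal (lam / 2) := hF _ (by linarith) (by linarith)
  have hb : μ (Iic b) = ENNReal.ofReal (r + lam / 2) := hF _ (by linarith) (by linarith)
  have hc : μ (Iic c) = ENNReal.ofReal r := hF _ hr0 (by linarith)
  have hd : μ (Iic d) = ENNReal.ofReal (1 - r) := hF _ (by linarith) (by linarith)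
  have hab : a < b := by
    by_contra h
    push_neg at h
    have h2 := measure_mono (μ := μ) (Iic_subset_Iic.mpr h)
    rw [ha, hb] at h2
    have := (ENNReal.ofReal_le_ofReal_iff (by linarith)).mp h2
    linarith
  have hmeas1 : μ (Ioo a b) = ENNReal.ofReal r := by
    rw [auxIoo, ha, hb, ← ENNReal.ofReal_sub _ (by linarith : (0:ℝ) ≤ lam / 2)]
    norm_num
  have h1 : (μ (Ioo a b)).toReal = r := by rw [hmeas1, ENNReal.toReal_ofReal hr0.le]
  refine ⟨h1, ?_⟩
  simp only [asym, ← hμdef]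
  rw [h1]
  have hM1 : μ (symmDiff (Ioo a b) (Iio c)) = ENNReal.ofReal lam := by
    rw [Set.symmDiff_def, measure_union disjoint_sdiff_sdiff
        (measurableSet_Iio.diff measurableSet_Ioo),
      pieceA, pieceB μ a b c hab, ha, hb, hc,
      max_eq_right (ENNReal.ofReal_le_ofReal (by linarith : lam / 2 ≤ r)),
      min_eq_left (ENNReal.ofReal_le_ofReal (by linarith : lam / 2 ≤ r)),
      tsub_eq_zero_of_le (ENNReal.ofReal_le_ofReal (by linarith : r ≤ r + lam / 2)),
      add_zero, ← ENNReal.ofReal_sub _ hr0.le,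
      ← ENNReal.ofReal_add (by linarith) (by linarith)]
    congr 1
    ring
  have hM1' : (μ (symmDiff (Ioo a b) (Iio c))).toReal = lam := by
    rw [hM1, ENNReal.toReal_ofReal hl0.le]
  rw [hM1']
  have hone : (1 : ℝ≥0∞) = ENNReal.ofReal 1 := ENNReal.ofReal_one.symm
  rcases le_total (r + lam / 2) (1 - r) with hcase | hcase
  · have hM2 : μ (symmDiff (Ioo a b) (Ioi d)) = ENNReal.ofReal (2 * r) := by
      rw [Set.symmDiff_def, measure_union disjoint_sdiff_sdiff
          (measurableSet_Ioi.diff measurableSet_Ioo),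
        pieceC, pieceD μ a b d hab, ha, hb, hd,
        min_eq_left (ENNReal.ofReal_le_ofReal hcase),
        max_eq_right (ENNReal.ofReal_le_ofReal hcase),
        tsub_eq_zero_of_le (ENNReal.ofReal_le_ofReal (by linarith : lam / 2 ≤ 1 - r)),
        zero_add, hone,
        ← ENNReal.ofReal_sub _ (by linarith : (0:ℝ) ≤ lam / 2),
        ← ENNReal.ofReal_sub _ (by linarith : (0:ℝ) ≤ 1 - r),
        ← ENNReal.ofReal_add (by linarith) (by linarith)]
      congr 1
      ring
    have hM2' : (μ (symmDiff (Ioo a b) (Ioi d))).toReal = 2 * r := by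
      rw [hM2, ENNReal.toReal_ofReal (by linarith)]
    rw [hM2']
    exact min_eq_left (by linarith)
  · have hM2 : μ (symmDiff (Ioo a b) (Ioi d)) = ENNReal.ofReal (2 - 2 * r - lam) := by
      rw [Set.symmDiff_def, measure_union disjoint_sdiff_sdiff
          (measurableSet_Ioi.diff measurableSet_Ioo),
        pieceC, pieceD μ a b d hab, ha, hb, hd,
        min_eq_right (ENNReal.ofReal_le_ofReal hcase),
        max_eq_left (ENNReal.ofReal_le_ofReal hcase),
        tsub_eq_zero_of_le (ENNReal.ofReal_le_ofReal (by linarith : lam / 2 ≤ 1 - r)),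
        zero_add, hone,
        ← ENNReal.ofReal_sub _ (by linarith : (0:ℝ) ≤ lam / 2),
        ← ENNReal.ofReal_sub _ (by linarith : (0:ℝ) ≤ r + lam / 2),
        ← ENNReal.ofReal_add (by linarith) (by linarith)]
      congr 1
      ring
    have hM2' : (μ (symmDiff (Ioo a b) (Ioi d))).toReal = 2 - 2 * r - lam := by
      rw [hM2, ENNReal.toReal_ofReal (by linarith)]
    rw [hM2']
    exact min_eq_left (by linarith)
end

section
/- Let r, λ be reals with 0 < r ≤ 1/2 and 0 < λ ≤ r. Then the disconnected set Ω_d = (−∞, F⁻¹(r − λ/2)) ∪ (F⁻¹(1 − λ/2), +∞) satisfies μ(Ω_d) = r and λ(Ω_d) = λ. -/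
open MeasureTheory Set Filter Topology
open scoped ENNReal

private lemma sd_left {a b c : ℝ} (hac : a < c) (hcb : c < b) :
    symmDiff (Iio a ∪ Ioi b) (Iio c) = Ico a c ∪ Ioi b := by
  ext x
  simp only [Set.symmDiff_def, Set.sup_eq_union, mem_union, mem_diff, mem_Iio, mem_Ioi, mem_Ico]
  constructor
  · rintro (⟨h1 | h1, h2⟩ | ⟨h1, h2⟩)
    · exact absurd h2 (not_not.2 (by linarith))
    · right; exact h1
    · left; exact ⟨by push_neg at h2; exact (h2.1 : _), h1⟩
  · rintro (⟨h1, h2⟩ | h)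
    · right; exact ⟨h2, by push_neg; exact ⟨h1, by linarith⟩⟩
    · left; exact ⟨Or.inr h, by linarith⟩

private lemma sd_right {a b d : ℝ} (had : a < d) (hdb : d < b) :
    symmDiff (Iio a ∪ Ioi b) (Ioi d) = Iio a ∪ Ioc d b := by
  ext x
  simp only [Set.symmDiff_def, Set.sup_eq_union, mem_union, mem_diff, mem_Iio, mem_Ioi, mem_Ioc]
  constructor
  · rintro (⟨h1 | h1, h2⟩ | ⟨h1, h2⟩)
    · left; exact h1
    · exact absurd h2 (not_not.2 (by linarith))
    · right; push_neg at h2; exact ⟨h1, h2.2⟩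
  · rintro (h | ⟨h1, h2⟩)
    · left; exact ⟨Or.inl h, by linarith⟩
    · right; exact ⟨h1, by push_neg; exact ⟨by linarith, h2⟩⟩

/-- The disconnected competitor `Ω_d = (-∞, F⁻¹(r - λ/2)) ∪ (F⁻¹(1 - λ/2), +∞)` has
`μ`-measure `r` and asymmetry `λ`, whenever `0 < r ≤ 1/2` and `0 < λ ≤ r`. -/
theorem omega_d_measure_asym (S : LogConcaveSetup) (r lam : ℝ)
    (hr0 : 0 < r) (hr : r ≤ 1 / 2)
    (hl0 : 0 < lam) (hl : lam ≤ r) :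
    (densMeasure S.f (Iio (S.Finv (r - lam / 2)) ∪ Ioi (S.Finv (1 - lam / 2)))).toReal = r ∧
    asym S (Iio (S.Finv (r - lam / 2)) ∪ Ioi (S.Finv (1 - lam / 2))) = lam := by
  set μ := densMeasure S.f with hμdef
  haveI : IsProbabilityMeasure μ := S.hprob
  haveI : NullSingletonClass μ := ⟨fun x => (withDensity_absolutelyContinuous _ _) (measure_singleton x)⟩
  set a := S.Finv (r - lam / 2) with ha
  set b := S.Finv (1 - lam / 2) with hb
  set c := S.Finv r with hc
  set d := S.Finv (1 - r) with hd
  have hFa : (μ (Iic a)).toReal = r - lam / 2 := S.hFinv _ ⟨by linarith, by linarith⟩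
  have hFb : (μ (Iic b)).toReal = 1 - lam / 2 := S.hFinv _ ⟨by linarith, by linarith⟩
  have hFc : (μ (Iic c)).toReal = r := S.hFinv _ ⟨by linarith, by linarith⟩
  have hFd : (μ (Iic d)).toReal = 1 - r := S.hFinv _ ⟨by linarith, by linarith⟩
  -- monotonicity: strictly smaller CDF value → strictly smaller point
  have mono : ∀ x y : ℝ, (μ (Iic x)).toReal < (μ (Iic y)).toReal → x < y := by
    intro x y h
    by_contra hxy
    push_neg at hxy
    exact absurd (ENNReal.toReal_mono (measure_ne_top μ _) (measure_mono (Iic_subset_Iic.2 hxy)))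
      (not_le.2 h)
  have hac : a < c := mono _ _ (by rw [hFa, hFc]; linarith)
  have hcb : c < b := mono _ _ (by rw [hFc, hFb]; linarith)
  have had : a < d := mono _ _ (by rw [hFa, hFd]; linarith)
  have hdb : d < b := mono _ _ (by rw [hFd, hFb]; linarith)
  have hab : a < b := hac.trans hcb
  -- additivity helper
  have hsum : ∀ s t : Set ℝ, MeasurableSet t → Disjoint s t →
      (μ (s ∪ t)).toReal = (μ s).toReal + (μ t).toReal := by
    intro s t ht hd'
    rw [measure_union hd' ht, ENNReal.toReal_add (measure_ne_top μ s) (measure_ne_top μ t)]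
  have hIio : ∀ x : ℝ, (μ (Iio x)).toReal = (μ (Iic x)).toReal := fun x => by
    rw [measure_congr Iio_ae_eq_Iic]
  have hIoi : ∀ x : ℝ, (μ (Ioi x)).toReal = 1 - (μ (Iic x)).toReal := by
    intro x
    have h := hsum (Iic x) (Ioi x) measurableSet_Ioi (Iic_disjoint_Ioi le_rfl)
    rw [Iic_union_Ioi] at h
    simp only [measure_univ, ENNReal.toReal_one] at h
    linarith
  have hIoc : ∀ x y : ℝ, x < y →
      (μ (Ioc x y)).toReal = (μ (Iic y)).toReal - (μ (Iic x)).toReal := by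
    intro x y hxy
    have h := hsum (Iic x) (Ioc x y) measurableSet_Ioc (Iic_disjoint_Ioc le_rfl)
    rw [Iic_union_Ioc_eq_Iic hxy.le] at h
    linarith
  -- measure of Ω
  have hmeas : (μ (Iio a ∪ Ioi b)).toReal = r := by
    rw [hsum _ _ measurableSet_Ioi ((Iic_disjoint_Ioi hab.le).mono Iio_subset_Iic_self le_rfl),
      hIio, hIoi, hFa, hFb]
    ring
  refine ⟨hmeas, ?_⟩
  rw [asym, ← hμdef, hmeas, ← hc, ← hd]
  rw [sd_left hac hcb, sd_right had hdb]
  have h1 : (μ (Ico a c ∪ Ioi b)).toReal = lam := by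
    rw [hsum _ _ measurableSet_Ioi
      ((Iic_disjoint_Ioi hcb.le).mono (Ico_subset_Iio_self.trans Iio_subset_Iic_self) le_rfl),
      measure_congr Ico_ae_eq_Ioc, hIoc _ _ hac, hIoi, hFa, hFb, hFc]
    ring
  have h2 : (μ (Iio a ∪ Ioc d b)).toReal = 2 * r - lam := by
    rw [hsum _ _ measurableSet_Ioc
      ((Iic_disjoint_Ioc had.le).mono Iio_subset_Iic_self le_rfl),
      hIio, hIoc _ _ hdb, hFa, hFb, hFd]
    ring
  rw [h1, h2]
  exact min_eq_left (by linarith)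
end

section
/- For every fixed x with 0 < x ≤ 1/2, the function y ↦ K_μ(x, y) is nondecreasing on (0, min(2x, 1−x)]. -/
open MeasureTheory Set Filter Topology
open scoped ENNReal

/-- The isoperimetric deficit function `K_μ`. -/
noncomputable def Kfun (J : ℝ → ℝ) (x y : ℝ) : ℝ :=
  if y ≤ x then J (x - y / 2) - J x + J (y / 2) else J (x + y / 2) - J x + J (y / 2)

/-- The convenient lower bound `L_μ` on the isoperimetric deficit function. -/
noncomputable def Lfun (J : ℝ → ℝ) (x y : ℝ) : ℝ :=
  if y ≤ x then J (y / 2) - (y / (2 * x)) * J x else J (y / 2) - (y / (2 * (1 - x))) * J x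

namespace KfunAux

variable (S : LogConcaveSetup)

/-- The support of the density. -/
def D : Set ℝ := {x : ℝ | 0 < S.f x}

lemma D_descr : D S = univ ∨ ∃ c : ℝ, 0 < c ∧ D S = Ioo (-c) c := by
  rcases eq_or_ne S.b₀ ⊤ with h | h
  · left
    ext x
    simp only [D, mem_setOf_eq, mem_univ, iff_true, S.hf_pos, h]
    try exact ENNReal.ofReal_lt_top
  · right
    refine ⟨S.b₀.toReal, ENNReal.toReal_pos S.hb₀.ne' h, ?_⟩
    ext x
    simp only [D, mem_setOf_eq, S.hf_pos, mem_Ioo,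
      ENNReal.ofReal_lt_iff_lt_toReal (abs_nonneg x) h, abs_lt]
    try tauto

lemma isOpen_D : IsOpen (D S) := by
  rcases D_descr S with h | ⟨c, _, h⟩ <;> rw [h]
  · exact isOpen_univ
  · exact isOpen_Ioo

lemma convex_D : Convex ℝ (D S) := by
  rcases D_descr S with h | ⟨c, _, h⟩ <;> rw [h]
  · exact convex_univ
  · exact convex_Ioo _ _

lemma neg_mem_D {x : ℝ} (hx : x ∈ D S) : -x ∈ D S := by
  simp only [D, mem_setOf_eq] at hx ⊢
  rwa [S.hf_even]

lemma mem_D_pos {x : ℝ} (hx : x ∈ D S) : 0 < S.f x := hx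

lemma continuousOn_f : ContinuousOn S.f (D S) := by
  have h1 : ContinuousOn (fun x => Real.log (S.f x)) (D S) :=
    S.hf_logConcave.continuousOn (isOpen_D S)
  have h2 : ContinuousOn (fun x => Real.exp (Real.log (S.f x))) (D S) :=
    Real.continuous_exp.comp_continuousOn h1
  exact h2.congr fun x hx => (Real.exp_log hx).symm

section Measure

/-- The cdf. -/
noncomputable def F (t : ℝ) : ℝ := (densMeasure S.f (Iic t)).toReal

lemma compl_D_null : densMeasure S.f (D S)ᶜ = 0 := by
  rw [densMeasure, withDensity_apply _ (isOpen_D S).measurableSet.compl]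
  have h : ∀ x ∈ (D S)ᶜ, ENNReal.ofReal (S.f x) = 0 := by
    intro x hx
    simp only [D, mem_compl_iff, mem_setOf_eq, not_lt] at hx
    exact ENNReal.ofReal_eq_zero.2 hx
  rw [setLIntegral_congr_fun (isOpen_D S).measurableSet.compl h]
  simp

lemma densMeasure_singleton (t : ℝ) : densMeasure S.f {t} = 0 :=
  (withDensity_absolutelyContinuous _ _) (Real.volume_singleton)

lemma F_mono : Monotone (F S) := by
  intro s t hst
  haveI := S.hprob
  exact ENNReal.toReal_mono (measure_ne_top _ _) (measure_mono (Iic_subset_Iic.2 hst))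

lemma F_sub {s t : ℝ} (hst : s ≤ t) :
    F S t - F S s = (densMeasure S.f (Ioc s t)).toReal := by
  haveI := S.hprob
  have h : densMeasure S.f (Iic t) = densMeasure S.f (Iic s) + densMeasure S.f (Ioc s t) := by
    rw [← measure_union (Iic_disjoint_Ioc le_rfl) measurableSet_Ioc, Iic_union_Ioc_eq_Iic hst]
  rw [F, F, h, ENNReal.toReal_add (measure_ne_top _ _) (measure_ne_top _ _)]
  ring

lemma densMeasure_Ioc_pos {s t : ℝ} (hst : s < t) (h : Ioc s t ⊆ D S) :
    0 < densMeasure S.f (Ioc s t) := by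
  rw [densMeasure, withDensity_apply _ measurableSet_Ioc]
  have hmeas : Measurable fun x => ENNReal.ofReal (S.f x) := S.hf_meas.ennreal_ofReal
  rw [lintegral_pos_iff_support hmeas]
  have hsub : Ioc s t ⊆ Function.support fun x => ENNReal.ofReal (S.f x) := by
    intro x hx
    simp only [Function.mem_support, ne_eq, ENNReal.ofReal_eq_zero, not_le]
    exact h hx
  have h1 : (0:ℝ≥0∞) < volume (Ioc s t) := by
    rw [Real.volume_Ioc]
    exact ENNReal.ofReal_pos.2 (by linarith)
  refine h1.trans_le ?_
  rw [Measure.restrict_apply (measurableSet_support hmeas)]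
  exact measure_mono (subset_inter_iff.2 ⟨hsub, subset_rfl⟩)

lemma F_strictMonoOn : StrictMonoOn (F S) (D S) := by
  intro s hs t ht hst
  have hIoc : Ioc s t ⊆ D S := fun z hz =>
    (convex_D S).ordConnected.out hs ht ⟨hz.1.le, hz.2⟩
  have h1 := F_sub S hst.le
  haveI := S.hprob
  have hpos : 0 < (densMeasure S.f (Ioc s t)).toReal :=
    ENNReal.toReal_pos (densMeasure_Ioc_pos S hst hIoc).ne' (measure_ne_top _ _)
  linarith

lemma F_Finv {r : ℝ} (hr : r ∈ Ioo (0:ℝ) 1) : F S (S.Finv r) = r := S.hFinv r hr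

lemma Finv_mem_D {r : ℝ} (hr : r ∈ Ioo (0:ℝ) 1) : S.Finv r ∈ D S := by
  by_contra hF
  rcases D_descr S with h | ⟨c, hc, h⟩
  · exact hF (h ▸ mem_univ _)
  · haveI := S.hprob
    rw [h, mem_Ioo, not_and_or, not_lt, not_lt] at hF
    rcases hF with h1 | h1
    · have h0 : densMeasure S.f (Iic (S.Finv r)) = 0 := by
        apply measure_mono_null _ (compl_D_null S)
        intro z hz
        rw [h, mem_compl_iff, mem_Ioo, not_and_or, not_lt, not_lt]
        left
        exact le_trans (mem_Iic.1 hz) h1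
      have := S.hFinv r hr
      rw [h0] at this
      simp at this
      exact absurd this.symm hr.1.ne'
    · have h0 : densMeasure S.f (Iic (S.Finv r))ᶜ = 0 := by
        apply measure_mono_null _ (compl_D_null S)
        intro z hz
        rw [mem_compl_iff, mem_Iic, not_le] at hz
        rw [h, mem_compl_iff, mem_Ioo, not_and_or, not_lt, not_lt]
        right
        exact le_trans h1 hz.le
      have h2 : densMeasure S.f (Iic (S.Finv r)) = 1 := by
        rw [prob_compl_eq_zero_iff measurableSet_Iic] at h0
        exact h0
      have := S.hFinv r hr
      rw [h2] at this
      simp at this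
      exact absurd this.symm hr.2.ne

lemma densMeasure_Iic_neg (t : ℝ) :
    densMeasure S.f (Iic (-t)) = densMeasure S.f (Ici t) := by
  rw [densMeasure, withDensity_apply _ measurableSet_Iic, withDensity_apply _ measurableSet_Ici]
  have key := (Measure.measurePreserving_neg (volume : Measure ℝ)).setLIntegral_comp_emb
    (Homeomorph.neg ℝ).measurableEmbedding (fun x => ENNReal.ofReal (S.f x)) (Ici t)
  have himg : (Neg.neg : ℝ → ℝ) '' Ici t = Iic (-t) := by simp
  rw [himg] at key
  rw [← key]
  apply lintegral_congr
  intro a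
  show ENNReal.ofReal (S.f (-a)) = ENNReal.ofReal (S.f a)
  rw [S.hf_even]

lemma F_neg (t : ℝ) : F S (-t) = 1 - F S t := by
  haveI := S.hprob
  have h1 : densMeasure S.f (Iic t) + densMeasure S.f (Ici t) = 1 := by
    have := measure_union_add_inter (μ := densMeasure S.f) (t := Ici t) (Iic t) measurableSet_Ici
    rw [Iic_union_Ici, Iic_inter_Ici, Icc_self, densMeasure_singleton, add_zero,
      measure_univ] at this
    exact this.symm
  have h2 : (densMeasure S.f (Ici t)).toReal = 1 - (densMeasure S.f (Iic t)).toReal := by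
    have hfin1 : densMeasure S.f (Iic t) ≠ ⊤ := measure_ne_top _ _
    have hfin2 : densMeasure S.f (Ici t) ≠ ⊤ := measure_ne_top _ _
    have := congrArg ENNReal.toReal h1
    rw [ENNReal.toReal_add hfin1 hfin2] at this
    simp at this
    linarith
  rw [F, densMeasure_Iic_neg, h2]
  rfl

lemma Finv_symm {r : ℝ} (hr : r ∈ Ioo (0:ℝ) 1) : S.Finv (1 - r) = -(S.Finv r) := by
  have hr' : 1 - r ∈ Ioo (0:ℝ) 1 := ⟨by linarith [hr.2], by linarith [hr.1]⟩
  have h1 : F S (S.Finv (1 - r)) = 1 - r := S.hFinv _ hr'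
  have h2 : F S (-(S.Finv r)) = 1 - F S (S.Finv r) := F_neg S _
  rw [show F S (S.Finv r) = r from S.hFinv r hr] at h2
  exact (F_strictMonoOn S).injOn (Finv_mem_D S hr')
    (neg_mem_D S (Finv_mem_D S hr)) (h1.trans h2.symm)

lemma J_symm {r : ℝ} (hr : r ∈ Ioo (0:ℝ) 1) : S.J (1 - r) = S.J r := by
  have hr' : 1 - r ∈ Ioo (0:ℝ) 1 := ⟨by linarith [hr.2], by linarith [hr.1]⟩
  rw [S.hJ _ hr', S.hJ _ hr, Finv_symm S hr, S.hf_even]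

end Measure

section Star

lemma integral_exp_aux (σ C a b c : ℝ) (hσ : σ ≠ 0) :
    ∫ u in a..b, C * Real.exp (σ * (u - c)) =
      C / σ * (Real.exp (σ * (b - c)) - Real.exp (σ * (a - c))) := by
  have hderiv : ∀ u ∈ uIcc a b, HasDerivAt (fun v => C / σ * Real.exp (σ * (v - c)))
      (C * Real.exp (σ * (u - c))) u := by
    intro u _
    have h1 : HasDerivAt (fun v : ℝ => σ * (v - c)) σ u := by
      simpa using ((hasDerivAt_id u).sub_const c).const_mul σ
    have h2 := (h1.exp).const_mul (C / σ)
    convert h2 using 1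
    all_goals try rfl
    field_simp
  rw [intervalIntegral.integral_eq_sub_of_hasDerivAt hderiv
    (Continuous.intervalIntegrable (continuous_const.mul (Real.continuous_exp.comp (continuous_const.mul (continuous_id.sub continuous_const)))) _ _)]
  ring

lemma star_ineq {f : ℝ → ℝ} {t1 t2 t3 : ℝ} (h12 : t1 < t2) (h23 : t2 < t3)
    (hpos : ∀ u ∈ Icc t1 t3, 0 < f u)
    (hcont : ContinuousOn f (Icc t1 t3))
    (hconc : ConcaveOn ℝ (Icc t1 t3) (fun u => Real.log (f u))) :
    (f t3 - f t2) * (∫ s in t1..t2, f s) ≤ (f t2 - f t1) * (∫ u in t2..t3, f u) := by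
  set g : ℝ → ℝ := fun u => Real.log (f u) with hg
  have h13 : t1 < t3 := h12.trans h23
  have m1 : t1 ∈ Icc t1 t3 := ⟨le_rfl, h13.le⟩
  have m2 : t2 ∈ Icc t1 t3 := ⟨h12.le, h23.le⟩
  have m3 : t3 ∈ Icc t1 t3 := ⟨h13.le, le_rfl⟩
  have hf1 : 0 < f t1 := hpos _ m1
  have hf2 : 0 < f t2 := hpos _ m2
  have hf3 : 0 < f t3 := hpos _ m3
  have hInt1 : IntervalIntegrable f volume t1 t2 := by
    apply ContinuousOn.intervalIntegrable
    apply hcont.mono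
    rw [uIcc_of_le h12.le]
    exact Icc_subset_Icc le_rfl h23.le
  have hInt2 : IntervalIntegrable f volume t2 t3 := by
    apply ContinuousOn.intervalIntegrable
    apply hcont.mono
    rw [uIcc_of_le h23.le]
    exact Icc_subset_Icc h12.le le_rfl
  have hA1 : 0 ≤ ∫ s in t1..t2, f s :=
    intervalIntegral.integral_nonneg h12.le
      (fun u hu => (hpos u ⟨hu.1, hu.2.trans h23.le⟩).le)
  have hA2 : 0 ≤ ∫ u in t2..t3, f u :=
    intervalIntegral.integral_nonneg h23.le
      (fun u hu => (hpos u ⟨h12.le.trans hu.1, hu.2⟩).le)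
  -- exp/log basic rewrites
  have hexp : ∀ u ∈ Icc t1 t3, f u = Real.exp (g u) := fun u hu =>
    (Real.exp_log (hpos u hu)).symm
  rcases lt_or_ge (f t2) (f t3) with hB | h32
  -- Case B : f t2 < f t3
  · have hg23 : g t2 < g t3 := Real.log_lt_log hf2 hB
    set σ : ℝ := (g t3 - g t2) / (t3 - t2) with hσdef
    have hσ : 0 < σ := div_pos (by linarith) (by linarith)
    have hne32 : t3 - t2 ≠ 0 := by linarith
    have hσne : σ ≠ 0 := hσ.ne'
    -- upper bound on [t1, t2]
    have hub : ∀ s ∈ Icc t1 t2, f s ≤ f t2 * Real.exp (σ * (s - t2)) := by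
      intro s hs
      rcases eq_or_lt_of_le hs.2 with he | hlt
      · rw [he]; simp
      · have hslope := hconc.slope_anti_adjacent ⟨hs.1, hs.2.trans h23.le⟩ m3 hlt h23
        have h1 : σ * (t2 - s) ≤ g t2 - g s := by
          rw [hσdef]
          calc (g t3 - g t2) / (t3 - t2) * (t2 - s)
              ≤ (g t2 - g s) / (t2 - s) * (t2 - s) := by
                apply mul_le_mul_of_nonneg_right hslope (by linarith)
            _ = g t2 - g s := div_mul_cancel₀ _ (show t2 - s ≠ 0 by linarith)
        have h2 : g s ≤ g t2 + σ * (s - t2) := by nlinarith [h1]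
        rw [hexp s ⟨hs.1, hs.2.trans h23.le⟩, hexp t2 m2, ← Real.exp_add]
        exact Real.exp_le_exp.2 h2
    -- chord lower bound on [t2, t3]
    have hlb : ∀ u ∈ Icc t2 t3, f t2 * Real.exp (σ * (u - t2)) ≤ f u := by
      intro u hu
      have hab : (0:ℝ) ≤ (t3 - u) / (t3 - t2) := div_nonneg (by linarith [hu.2]) (by linarith)
      have hba : (0:ℝ) ≤ (u - t2) / (t3 - t2) := div_nonneg (by linarith [hu.1]) (by linarith)
      have hsum : (t3 - u) / (t3 - t2) + (u - t2) / (t3 - t2) = 1 := by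
        field_simp
        ring
      have hcomb := hconc.2 m2 m3 hab hba hsum
      have hpteq : ((t3 - u) / (t3 - t2)) • t2 + ((u - t2) / (t3 - t2)) • t3 = u := by
        simp only [smul_eq_mul]; field_simp
        ring
      rw [hpteq] at hcomb
      have h2 : g t2 + σ * (u - t2) ≤ g u := by
        have : (t3 - u) / (t3 - t2) * g t2 + (u - t2) / (t3 - t2) * g t3
            = g t2 + σ * (u - t2) := by
          rw [hσdef]; field_simp; ring
        calc g t2 + σ * (u - t2)
            = ((t3 - u) / (t3 - t2)) • g t2 + ((u - t2) / (t3 - t2)) • g t3 := by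
              rw [smul_eq_mul, smul_eq_mul, this]
          _ ≤ g u := hcomb
      rw [hexp u ⟨h12.le.trans hu.1, hu.2⟩, hexp t2 m2, ← Real.exp_add]
      exact Real.exp_le_exp.2 h2
    have hIntE1 : IntervalIntegrable (fun s => f t2 * Real.exp (σ * (s - t2))) volume t1 t2 :=
      Continuous.intervalIntegrable (continuous_const.mul (Real.continuous_exp.comp (continuous_const.mul (continuous_id.sub continuous_const)))) _ _
    have hIntE2 : IntervalIntegrable (fun s => f t2 * Real.exp (σ * (s - t2))) volume t2 t3 :=
      Continuous.intervalIntegrable (continuous_const.mul (Real.continuous_exp.comp (continuous_const.mul (continuous_id.sub continuous_const)))) _ _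
    have I1le : (∫ s in t1..t2, f s)
        ≤ f t2 / σ * (1 - Real.exp (σ * (t1 - t2))) := by
      have := intervalIntegral.integral_mono_on h12.le hInt1 hIntE1 hub
      rwa [integral_exp_aux σ (f t2) t1 t2 t2 hσ.ne', show σ * (t2 - t2) = 0 by ring,
        Real.exp_zero] at this
    have I2ge : f t2 / σ * (Real.exp (σ * (t3 - t2)) - 1) ≤ ∫ u in t2..t3, f u := by
      have := intervalIntegral.integral_mono_on h23.le hIntE2 hInt2 hlb
      rwa [integral_exp_aux σ (f t2) t2 t3 t2 hσ.ne', show σ * (t2 - t2) = 0 by ring,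
        Real.exp_zero] at this
    have hval : f t2 * Real.exp (σ * (t3 - t2)) = f t3 := by
      rw [hexp t2 m2, hexp t3 m3, ← Real.exp_add]
      congr 1
      rw [hσdef, div_mul_cancel₀ _ hne32]
      ring
    have hf1le : f t1 ≤ f t2 * Real.exp (σ * (t1 - t2)) := hub t1 ⟨le_rfl, h12.le⟩
    have hE1lt : Real.exp (σ * (t1 - t2)) < 1 := by
      rw [Real.exp_lt_one_iff]
      nlinarith
    have hf12 : f t1 ≤ f t2 := by nlinarith
    -- assemble
    have e3 : (f t3 - f t2) / σ = f t2 / σ * (Real.exp (σ * (t3 - t2)) - 1) := by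
      rw [← hval]; ring
    calc (f t3 - f t2) * (∫ s in t1..t2, f s)
        ≤ (f t3 - f t2) * (f t2 / σ * (1 - Real.exp (σ * (t1 - t2)))) :=
          mul_le_mul_of_nonneg_left I1le (by linarith)
      _ = (f t2 * (1 - Real.exp (σ * (t1 - t2)))) * ((f t3 - f t2) / σ) := by
          field_simp
      _ ≤ (f t2 - f t1) * ((f t3 - f t2) / σ) := by
          apply mul_le_mul_of_nonneg_right (by nlinarith)
          apply div_nonneg (by linarith) hσ.le
      _ = (f t2 - f t1) * (f t2 / σ * (Real.exp (σ * (t3 - t2)) - 1)) := by rw [e3]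
      _ ≤ (f t2 - f t1) * (∫ u in t2..t3, f u) :=
          mul_le_mul_of_nonneg_left I2ge (by linarith)
  · rcases le_or_gt (f t1) (f t2) with h12f | hC
    -- Case A : easy signs
    · have hle : (f t3 - f t2) * (∫ s in t1..t2, f s) ≤ 0 :=
        mul_nonpos_iff.2 (Or.inr ⟨by linarith, hA1⟩)
      have hge : 0 ≤ (f t2 - f t1) * (∫ u in t2..t3, f u) :=
        mul_nonneg (by linarith) hA2
      linarith
    -- Case C : f t3 ≤ f t2 < f t1
    · have hg12 : g t2 < g t1 := Real.log_lt_log hf2 hC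
      set σ : ℝ := (g t2 - g t1) / (t2 - t1) with hσdef
      have hσ : σ < 0 := div_neg_of_neg_of_pos (by linarith) (by linarith)
      have hne21 : t2 - t1 ≠ 0 := by linarith
      have hne32 : t3 - t2 ≠ 0 := by linarith
      have hσne : σ ≠ 0 := hσ.ne
      -- upper bound on [t2, t3]
      have hub2 : ∀ u ∈ Icc t2 t3, f u ≤ f t2 * Real.exp (σ * (u - t2)) := by
        intro u hu
        rcases eq_or_lt_of_le hu.1 with he | hlt
        · rw [← he]; simp
        · have hslope := hconc.slope_anti_adjacent m1 ⟨h12.le.trans hu.1, hu.2⟩ h12 hlt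
          have h1 : g u - g t2 ≤ σ * (u - t2) := by
            rw [hσdef]
            calc g u - g t2 = (g u - g t2) / (u - t2) * (u - t2) :=
                  (div_mul_cancel₀ _ (show u - t2 ≠ 0 by linarith)).symm
              _ ≤ (g t2 - g t1) / (t2 - t1) * (u - t2) :=
                  mul_le_mul_of_nonneg_right hslope (by linarith)
          have h2 : g u ≤ g t2 + σ * (u - t2) := by linarith
          rw [hexp u ⟨h12.le.trans hu.1, hu.2⟩, hexp t2 m2, ← Real.exp_add]
          exact Real.exp_le_exp.2 h2
      -- chord lower bound on [t1, t2]
      have hlb1 : ∀ s ∈ Icc t1 t2, f t2 * Real.exp (σ * (s - t2)) ≤ f s := by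
        intro s hs
        have hab : (0:ℝ) ≤ (t2 - s) / (t2 - t1) := div_nonneg (by linarith [hs.2]) (by linarith)
        have hba : (0:ℝ) ≤ (s - t1) / (t2 - t1) := div_nonneg (by linarith [hs.1]) (by linarith)
        have hsum : (t2 - s) / (t2 - t1) + (s - t1) / (t2 - t1) = 1 := by field_simp; ring
        have hcomb := hconc.2 m1 m2 hab hba hsum
        have hptsum : ((t2 - s) / (t2 - t1)) • t1 + ((s - t1) / (t2 - t1)) • t2 = s := by
          simp only [smul_eq_mul]; field_simp
          ring
        rw [hptsum] at hcomb
        have h2 : g t2 + σ * (s - t2) ≤ g s := by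
          have heq : (t2 - s) / (t2 - t1) * g t1 + (s - t1) / (t2 - t1) * g t2
              = g t2 + σ * (s - t2) := by
            rw [hσdef]; field_simp; ring
          calc g t2 + σ * (s - t2)
              = ((t2 - s) / (t2 - t1)) • g t1 + ((s - t1) / (t2 - t1)) • g t2 := by
                rw [smul_eq_mul, smul_eq_mul, heq]
            _ ≤ g s := hcomb
        rw [hexp s ⟨hs.1, hs.2.trans h23.le⟩, hexp t2 m2, ← Real.exp_add]
        exact Real.exp_le_exp.2 h2
      have hIntE1 : IntervalIntegrable (fun s => f t2 * Real.exp (σ * (s - t2))) volume t1 t2 :=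
        Continuous.intervalIntegrable (continuous_const.mul (Real.continuous_exp.comp (continuous_const.mul (continuous_id.sub continuous_const)))) _ _
      have hIntE2 : IntervalIntegrable (fun s => f t2 * Real.exp (σ * (s - t2))) volume t2 t3 :=
        Continuous.intervalIntegrable (continuous_const.mul (Real.continuous_exp.comp (continuous_const.mul (continuous_id.sub continuous_const)))) _ _
      have I1ge : f t2 / σ * (1 - Real.exp (σ * (t1 - t2))) ≤ ∫ s in t1..t2, f s := by
        have := intervalIntegral.integral_mono_on h12.le hIntE1 hInt1 hlb1
        rwa [integral_exp_aux σ (f t2) t1 t2 t2 hσ.ne, show σ * (t2 - t2) = 0 by ring,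
          Real.exp_zero] at this
      have I2le : (∫ u in t2..t3, f u) ≤ f t2 / σ * (Real.exp (σ * (t3 - t2)) - 1) := by
        have := intervalIntegral.integral_mono_on h23.le hInt2 hIntE2 hub2
        rwa [integral_exp_aux σ (f t2) t2 t3 t2 hσ.ne, show σ * (t2 - t2) = 0 by ring,
          Real.exp_zero] at this
      have hval1 : f t2 * Real.exp (σ * (t1 - t2)) = f t1 := by
        rw [hexp t2 m2, hexp t1 m1, ← Real.exp_add]
        congr 1
        rw [hσdef]
        field_simp
        ring
      have hf3le : f t3 ≤ f t2 * Real.exp (σ * (t3 - t2)) := hub2 t3 ⟨h23.le, le_rfl⟩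
      have hPdef : f t2 / σ * (1 - Real.exp (σ * (t1 - t2))) = (f t2 - f t1) / σ := by
        rw [← hval1]; ring
      have hPpos : 0 ≤ (f t2 - f t1) / σ := by
        rw [div_nonneg_iff]
        right
        constructor <;> linarith
      rw [hPdef] at I1ge
      calc (f t3 - f t2) * (∫ s in t1..t2, f s)
          ≤ (f t3 - f t2) * ((f t2 - f t1) / σ) := by
            apply mul_le_mul_of_nonpos_left I1ge (by linarith)
        _ ≤ (f t2 * Real.exp (σ * (t3 - t2)) - f t2) * ((f t2 - f t1) / σ) :=
            mul_le_mul_of_nonneg_right (by linarith) hPpos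
        _ = (f t2 - f t1) * (f t2 / σ * (Real.exp (σ * (t3 - t2)) - 1)) := by
            field_simp
        _ ≤ (f t2 - f t1) * (∫ u in t2..t3, f u) := by
            apply mul_le_mul_of_nonpos_left I2le (by linarith)

end Star

section JConcave

lemma measure_Ioc_toReal_eq_integral {s t : ℝ} (hst : s ≤ t) (h : Ioc s t ⊆ D S) :
    (densMeasure S.f (Ioc s t)).toReal = ∫ u in s..t, S.f u := by
  rw [intervalIntegral.integral_of_le hst, densMeasure, withDensity_apply _ measurableSet_Ioc]
  rw [MeasureTheory.integral_eq_lintegral_of_nonneg_ae]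
  · exact ((ae_restrict_iff' measurableSet_Ioc).2 (ae_of_all _ fun z hz => (h hz).le))
  · exact (S.hf_meas.aestronglyMeasurable).restrict

lemma J_threepoint {r1 r2 r3 : ℝ} (h1 : r1 ∈ Ioo (0:ℝ) 1) (h2 : r2 ∈ Ioo (0:ℝ) 1)
    (h3 : r3 ∈ Ioo (0:ℝ) 1) (h12 : r1 < r2) (h23 : r2 < r3) :
    (r3 - r2) * S.J r1 + (r2 - r1) * S.J r3 ≤ (r3 - r1) * S.J r2 := by
  set t1 := S.Finv r1
  set t2 := S.Finv r2
  set t3 := S.Finv r3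
  have m1 : t1 ∈ D S := Finv_mem_D S h1
  have m2 : t2 ∈ D S := Finv_mem_D S h2
  have m3 : t3 ∈ D S := Finv_mem_D S h3
  have hF1 : F S t1 = r1 := S.hFinv r1 h1
  have hF2 : F S t2 = r2 := S.hFinv r2 h2
  have hF3 : F S t3 = r3 := S.hFinv r3 h3
  have ht12 : t1 < t2 := by
    by_contra hc
    push_neg at hc
    have := F_mono S hc
    rw [hF1, hF2] at this
    linarith
  have ht23 : t2 < t3 := by
    by_contra hc
    push_neg at hc
    have := F_mono S hc
    rw [hF2, hF3] at this
    linarith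
  have hIcc : Icc t1 t3 ⊆ D S := fun z hz => (convex_D S).ordConnected.out m1 m3 hz
  have hsub12 : Ioc t1 t2 ⊆ D S := fun z hz => hIcc ⟨hz.1.le, hz.2.trans ht23.le⟩
  have hsub23 : Ioc t2 t3 ⊆ D S := fun z hz => hIcc ⟨ht12.le.trans hz.1.le, hz.2⟩
  have e12 : r2 - r1 = ∫ u in t1..t2, S.f u := by
    rw [← hF1, ← hF2, F_sub S ht12.le, measure_Ioc_toReal_eq_integral S ht12.le hsub12]
  have e23 : r3 - r2 = ∫ u in t2..t3, S.f u := by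
    rw [← hF2, ← hF3, F_sub S ht23.le, measure_Ioc_toReal_eq_integral S ht23.le hsub23]
  have hstar := star_ineq ht12 ht23 (fun u hu => hIcc hu)
    ((continuousOn_f S).mono hIcc)
    (S.hf_logConcave.subset hIcc (convex_Icc _ _))
  rw [← e12, ← e23] at hstar
  have hJ1 : S.J r1 = S.f t1 := S.hJ r1 h1
  have hJ2 : S.J r2 = S.f t2 := S.hJ r2 h2
  have hJ3 : S.J r3 = S.f t3 := S.hJ r3 h3
  rw [hJ1, hJ2, hJ3]
  nlinarith [hstar]

lemma J_concave : ConcaveOn ℝ (Ioo (0:ℝ) 1) S.J := by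
  apply concaveOn_of_slope_anti_adjacent (convex_Ioo 0 1)
  intro r1 r2 r3 h1 h3 h12 h23
  have h2 : r2 ∈ Ioo (0:ℝ) 1 := ⟨h1.1.trans h12, h23.trans h3.2⟩
  have key := J_threepoint S h1 h2 h3 h12 h23
  rw [div_le_div_iff₀ (by linarith) (by linarith)]
  nlinarith [key]

lemma J_incr {a c h : ℝ} (hh : 0 < h) (hac : a ≤ c) (ha : a ∈ Ioo (0:ℝ) 1)
    (hch : c + h ∈ Ioo (0:ℝ) 1) : S.J (c + h) - S.J c ≤ S.J (a + h) - S.J a := by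
  have hconv : ConvexOn ℝ (Ioo (0:ℝ) 1) (fun r => -S.J r) := (J_concave S).neg
  have hah : a + h ∈ Ioo (0:ℝ) 1 := ⟨by linarith [ha.1], by linarith [hch.2]⟩
  have hc : c ∈ Ioo (0:ℝ) 1 := ⟨by linarith [ha.1], by linarith [hch.2]⟩
  have hpos2 : 0 < c + h - a := by linarith
  have s1 := hconv.secant_mono ha hah hch
    (show a + h ≠ a by intro hcon; nlinarith [congrArg (· - a) hcon])
    (show c + h ≠ a by intro hcon; nlinarith [congrArg (· - a) hcon])
    (by linarith)
  have s2 := hconv.secant_mono hch ha hc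
    (show a ≠ c + h by intro hcon; nlinarith [congrArg (· - a) hcon])
    (show c ≠ c + h by intro hcon; nlinarith [congrArg (· - c) hcon])
    hac
  try simp only [] at s1 s2
  rw [show a + h - a = h by ring] at s1
  rw [div_le_div_iff₀ hh hpos2] at s1
  rw [show a - (c + h) = -(c + h - a) by ring, show c - (c + h) = -h by ring,
    div_neg, div_neg, neg_le_neg_iff] at s2
  rw [div_le_div_iff₀ hh hpos2] at s2
  nlinarith [s1, s2, hpos2]

lemma J_min {w u : ℝ} (hw : w ∈ Ioo (0:ℝ) 1) (hu : u ∈ Ioo (0:ℝ) 1)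
    (hwu : w ≤ u) (hu1 : u ≤ 1 - w) : S.J w ≤ S.J u := by
  rcases eq_or_lt_of_le hwu with he | hlt
  · rw [← he]
  have hwlt : w < 1 - w := lt_of_lt_of_le hlt hu1
  have hw2 : (0:ℝ) < 1 - 2*w := by linarith
  have h1w : (1:ℝ) - w ∈ Ioo (0:ℝ) 1 := ⟨by linarith [hw.2], by linarith [hw.1]⟩
  have hasum : (1 - w - u)/(1 - 2*w) + (u - w)/(1 - 2*w) = 1 := by
    rw [← add_div, show 1 - w - u + (u - w) = 1 - 2*w by ring, div_self hw2.ne']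
  have hcomb := (J_concave S).2 hw h1w
    (div_nonneg (by linarith) hw2.le) (div_nonneg (by linarith) hw2.le) hasum
  have hpt : ((1 - w - u)/(1 - 2*w)) • w + ((u - w)/(1 - 2*w)) • (1 - w) = u := by
    have hne : 1 - 2*w ≠ 0 := hw2.ne'
    rw [smul_eq_mul, smul_eq_mul]
    rw [div_mul_eq_mul_div, div_mul_eq_mul_div, ← add_div, div_eq_iff hne]
    ring
  rw [hpt] at hcomb
  have hJsym : S.J (1 - w) = S.J w := J_symm S hw
  calc S.J w = ((1 - w - u)/(1 - 2*w)) * S.J w + ((u - w)/(1 - 2*w)) * S.J (1 - w) := by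
        rw [hJsym]
        rw [← add_mul, hasum]
        ring
    _ = ((1 - w - u)/(1 - 2*w)) • S.J w + ((u - w)/(1 - 2*w)) • S.J (1 - w) := by
        rw [smul_eq_mul, smul_eq_mul]
    _ ≤ S.J u := hcomb

end JConcave

end KfunAux

open KfunAux in
/-- For fixed `0 < x ≤ 1/2`, the isoperimetric deficit function `y ↦ K_μ(x, y)` is
nondecreasing on `(0, min (2x) (1-x)]`. -/
theorem Kfun_monotone (S : LogConcaveSetup) (x : ℝ) (hx0 : 0 < x) (hx : x ≤ 1 / 2) :
    MonotoneOn (fun y => Kfun S.J x y) (Ioc (0:ℝ) (min (2 * x) (1 - x))) := by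
  intro y1 hy1 y2 hy2 h12
  rcases eq_or_lt_of_le h12 with rfl | hlt
  · exact le_rfl
  have hy1p : 0 < y1 := hy1.1
  have hy2p : 0 < y2 := hy2.1
  have hy1a : y1 ≤ 2 * x := hy1.2.trans (min_le_left _ _)
  have hy1b : y1 ≤ 1 - x := hy1.2.trans (min_le_right _ _)
  have hy2a : y2 ≤ 2 * x := hy2.2.trans (min_le_left _ _)
  have hy2b : y2 ≤ 1 - x := hy2.2.trans (min_le_right _ _)
  have hxIoo : x ∈ Ioo (0:ℝ) 1 := ⟨hx0, by linarith⟩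
  simp only
  rw [Kfun, Kfun]
  -- memberships used repeatedly
  have hy12m : y1 / 2 ∈ Ioo (0:ℝ) 1 := ⟨by linarith, by linarith⟩
  have hy22m : y2 / 2 ∈ Ioo (0:ℝ) 1 := ⟨by linarith, by linarith⟩
  split_ifs with h1 h2 h2
  · -- y1 ≤ x, y2 ≤ x
    have key := J_incr S (a := y1 / 2) (c := x - y2 / 2) (h := (y2 - y1) / 2)
      (by linarith) (by linarith) hy12m (by constructor <;> [linarith; linarith])
    rw [show x - y2 / 2 + (y2 - y1) / 2 = x - y1 / 2 by ring,
      show y1 / 2 + (y2 - y1) / 2 = y2 / 2 by ring] at key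
    linarith
  · -- y1 ≤ x < y2
    push_neg at h2
    have hxy2m : x + y2 / 2 ∈ Ioo (0:ℝ) 1 := ⟨by linarith, by linarith⟩
    rw [← J_symm S hxy2m, show (1:ℝ) - (x + y2 / 2) = 1 - x - y2 / 2 by ring]
    -- step 1 : J(x - y1/2) + J(y1/2) ≤ 2 * J(x/2)
    have hx2m : x / 2 ∈ Ioo (0:ℝ) 1 := ⟨by linarith, by linarith⟩
    have step1 : S.J (x - y1 / 2) + S.J (y1 / 2) ≤ 2 * S.J (x / 2) := by
      rcases eq_or_lt_of_le h1 with he | hlt1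
      · rw [he, show x - x / 2 = x / 2 by ring]
        linarith
      · have key := J_incr S (a := y1 / 2) (c := x / 2) (h := (x - y1) / 2)
          (by linarith) (by linarith) hy12m (by constructor <;> [linarith; linarith])
        rw [show x / 2 + (x - y1) / 2 = x - y1 / 2 by ring,
          show y1 / 2 + (x - y1) / 2 = x / 2 by ring] at key
        linarith
    -- step 2 : J(x/2) ≤ J(y2/2)
    have step2 : S.J (x / 2) ≤ S.J (y2 / 2) :=
      J_min S hx2m hy22m (by linarith) (by linarith)
    -- step 3 : J(x/2) ≤ J(1 - x - y2/2)
    have step3 : S.J (x / 2) ≤ S.J (1 - x - y2 / 2) :=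
      J_min S hx2m ⟨by linarith, by linarith⟩ (by linarith) (by linarith)
    linarith
  · -- x < y1, y2 ≤ x : impossible
    exact absurd (h12.trans h2) h1
  · -- x < y1, x < y2
    push_neg at h1 h2
    have hxy1m : x + y1 / 2 ∈ Ioo (0:ℝ) 1 := ⟨by linarith, by linarith⟩
    have hxy2m : x + y2 / 2 ∈ Ioo (0:ℝ) 1 := ⟨by linarith, by linarith⟩
    rw [← J_symm S hxy1m, ← J_symm S hxy2m,
      show (1:ℝ) - (x + y1 / 2) = 1 - x - y1 / 2 by ring,
      show (1:ℝ) - (x + y2 / 2) = 1 - x - y2 / 2 by ring]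
    have key := J_incr S (a := y1 / 2) (c := 1 - x - y2 / 2) (h := (y2 - y1) / 2)
      (by linarith) (by linarith) hy12m (by constructor <;> [linarith; linarith])
    rw [show 1 - x - y2 / 2 + (y2 - y1) / 2 = 1 - x - y1 / 2 by ring,
      show y1 / 2 + (y2 - y1) / 2 = y2 / 2 by ring] at key
    linarith
end

section
/- For every fixed x with 0 < x ≤ 1/2, the function y ↦ K_μ(x, y) is lower semicontinuous on (0, min(2x, 1−x)], continuous on (0, x], and concave on (x, min(2x, 1−x)] (when this interval is nonempty). -/
open MeasureTheory Set Filter Topology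
open scoped ENNReal

namespace LogConcaveSetup
variable (S : LogConcaveSetup)

/-- The nonnegative part of the density. -/
noncomputable def g (t : ℝ) : ℝ := max (S.f t) 0

lemma g_nonneg (t : ℝ) : 0 ≤ S.g t := le_max_right _ _

lemma g_meas : Measurable S.g := S.hf_meas.max measurable_const

lemma ofReal_g (t : ℝ) : ENNReal.ofReal (S.g t) = ENNReal.ofReal (S.f t) := by
  rcases le_total (S.f t) 0 with h | h
  · simp [g, max_eq_right h, ENNReal.ofReal_eq_zero.2 h]
  · simp [g, max_eq_left h]

lemma g_eq_f {t : ℝ} (h : 0 < S.f t) : S.g t = S.f t := max_eq_left h.le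

lemma g_pos_iff {t : ℝ} : 0 < S.g t ↔ 0 < S.f t := by
  constructor
  · intro h
    by_contra hc
    push_neg at hc
    simp [g, max_eq_right hc] at h
  · intro h; rw [S.g_eq_f h]; exact h

lemma supp_open : IsOpen {x : ℝ | 0 < S.f x} := by
  have : {x : ℝ | 0 < S.f x} = (fun x : ℝ => ENNReal.ofReal |x|) ⁻¹' (Iio S.b₀) := by
    ext x; simp [S.hf_pos x]
  rw [this]
  exact (ENNReal.continuous_ofReal.comp (continuous_abs)).isOpen_preimage _ isOpen_Iio

lemma supp_ordConn : OrdConnected {x : ℝ | 0 < S.f x} := by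
  constructor
  intro a ha b hb y hy
  rw [mem_setOf_eq, S.hf_pos]
  have h1 : |y| ≤ max |a| |b| := abs_le_max_abs_abs hy.1 hy.2
  calc ENNReal.ofReal |y| ≤ ENNReal.ofReal (max |a| |b|) := ENNReal.ofReal_le_ofReal h1
    _ = max (ENNReal.ofReal |a|) (ENNReal.ofReal |b|) := by
        rcases le_total (|a|) (|b|) with h | h
        · simp [max_eq_right h, max_eq_right (ENNReal.ofReal_le_ofReal h)]
        · simp [max_eq_left h, max_eq_left (ENNReal.ofReal_le_ofReal h)]
    _ < S.b₀ := max_lt ((S.hf_pos a).1 ha) ((S.hf_pos b).1 hb)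

lemma supp_convex : Convex ℝ {x : ℝ | 0 < S.f x} :=
  convex_iff_ordConnected.mpr S.supp_ordConn

lemma f_contOn : ContinuousOn S.f {x : ℝ | 0 < S.f x} := by
  have h1 : ContinuousOn (fun x => Real.log (S.f x)) {x : ℝ | 0 < S.f x} :=
    S.hf_logConcave.continuousOn S.supp_open
  have h2 : ContinuousOn (fun x => Real.exp (Real.log (S.f x))) {x : ℝ | 0 < S.f x} :=
    Real.continuous_exp.comp_continuousOn h1
  exact h2.congr fun x hx => (Real.exp_log hx).symm

lemma f_contAt {a : ℝ} (ha : 0 < S.f a) : ContinuousAt S.f a :=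
  S.f_contOn.continuousAt (S.supp_open.mem_nhds ha)

lemma g_contAt {a : ℝ} (ha : 0 < S.f a) : ContinuousAt S.g a :=
  (S.f_contAt ha).max continuousAt_const

/-- The cumulative distribution function. -/
noncomputable def Fr (t : ℝ) : ℝ := (densMeasure S.f (Iic t)).toReal

lemma mu_ne_top (s : Set ℝ) : densMeasure S.f s ≠ ⊤ := by
  have := S.hprob
  exact (measure_lt_top (densMeasure S.f) s).ne

lemma mu_univ : densMeasure S.f univ = 1 := by
  have := S.hprob; exact measure_univ

lemma Fr_mono : Monotone S.Fr := by
  intro a b hab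
  exact ENNReal.toReal_mono (S.mu_ne_top _) (measure_mono (Iic_subset_Iic.2 hab))

lemma mu_Ioc_toReal {a b : ℝ} (hab : a ≤ b) :
    (densMeasure S.f (Ioc a b)).toReal = ∫ x in a..b, S.g x := by
  rw [densMeasure, withDensity_apply _ measurableSet_Ioc]
  rw [intervalIntegral.integral_of_le hab]
  rw [integral_eq_lintegral_of_nonneg_ae (Eventually.of_forall S.g_nonneg)
    S.g_meas.aestronglyMeasurable.restrict]
  congr 1
  exact lintegral_congr fun x => (S.ofReal_g x).symm

lemma Fr_sub {a b : ℝ} (hab : a ≤ b) : S.Fr b - S.Fr a = ∫ x in a..b, S.g x := by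
  rw [← S.mu_Ioc_toReal hab]
  have h1 : Iic b = Iic a ∪ Ioc a b := (Iic_union_Ioc_eq_Iic hab).symm
  have h2 : Disjoint (Iic a) (Ioc a b) := by
    rw [disjoint_left]; intro x hx hx2; exact absurd hx2.1 (not_lt.2 hx)
  rw [Fr, Fr, h1, measure_union h2 measurableSet_Ioc,
    ENNReal.toReal_add (S.mu_ne_top _) (S.mu_ne_top _)]
  ring

lemma g_integrable : Integrable S.g (volume : Measure ℝ) := by
  refine ⟨S.g_meas.aestronglyMeasurable, ?_⟩
  rw [hasFiniteIntegral_iff_norm]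
  have h : ∀ x, ENNReal.ofReal ‖S.g x‖ = ENNReal.ofReal (S.f x) := by
    intro x; rw [Real.norm_eq_abs, abs_of_nonneg (S.g_nonneg x), S.ofReal_g]
  simp_rw [h]
  have : ∫⁻ x, ENNReal.ofReal (S.f x) = densMeasure S.f univ := by
    rw [densMeasure, withDensity_apply _ MeasurableSet.univ, Measure.restrict_univ]
  rw [this, S.mu_univ]
  exact ENNReal.one_lt_top

lemma mu_Ioc_pos {a b : ℝ} (hab : a < b) (ha : 0 < S.f a) (hb : 0 < S.f b) :
    0 < densMeasure S.f (Ioc a b) := by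
  have hmeasf : Measurable fun x : ℝ => ENNReal.ofReal (S.f x) :=
    ENNReal.measurable_ofReal.comp S.hf_meas
  rw [densMeasure, withDensity_apply _ measurableSet_Ioc]
  rw [setLIntegral_pos_iff hmeasf]
  have hsub : Ioc a b ⊆ Function.support fun x => ENNReal.ofReal (S.f x) := by
    intro x hx
    simp only [Function.mem_support, ne_eq, ENNReal.ofReal_eq_zero, not_le]
    exact S.supp_ordConn.out ha hb ⟨hx.1.le, hx.2⟩
  rw [inter_eq_self_of_subset_right hsub]
  simp [hab]

lemma Fr_lt {a b : ℝ} (hab : a < b) (ha : 0 < S.f a) (hb : 0 < S.f b) :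
    S.Fr a < S.Fr b := by
  have h := S.mu_Ioc_pos hab ha hb
  have h2 : S.Fr b - S.Fr a = (densMeasure S.f (Ioc a b)).toReal := by
    rw [S.mu_Ioc_toReal hab.le, S.Fr_sub hab.le]
  have h3 : 0 < (densMeasure S.f (Ioc a b)).toReal :=
    ENNReal.toReal_pos h.ne' (S.mu_ne_top _)
  linarith

lemma Fr_Finv {r : ℝ} (hr : r ∈ Ioo (0:ℝ) 1) : S.Fr (S.Finv r) = r := S.hFinv r hr

lemma Finv_supp {r : ℝ} (hr : r ∈ Ioo (0:ℝ) 1) : 0 < S.f (S.Finv r) := by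
  by_contra hc
  rw [S.hf_pos, not_lt] at hc
  set a := S.Finv r with ha
  have key : ∀ x : ℝ, |a| ≤ |x| → ENNReal.ofReal (S.f x) = 0 := by
    intro x hx
    have h1 : ¬ (0 < S.f x) := by
      rw [S.hf_pos, not_lt]
      exact le_trans hc (ENNReal.ofReal_le_ofReal hx)
    rw [ENNReal.ofReal_eq_zero]
    linarith [not_lt.mp h1]
  have hmeasf : Measurable fun x : ℝ => ENNReal.ofReal (S.f x) :=
    ENNReal.measurable_ofReal.comp S.hf_meas
  have hFr := S.hFinv r hr
  rw [← ha] at hFr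
  rcases le_or_gt 0 a with h0 | h0
  · have hIoi : densMeasure S.f (Ioi a) = 0 := by
      rw [densMeasure, withDensity_apply _ measurableSet_Ioi]
      rw [setLIntegral_eq_zero_iff measurableSet_Ioi hmeasf]
      filter_upwards with x hx
      refine key x ?_
      rw [abs_of_nonneg h0, abs_of_nonneg (le_trans h0 (le_of_lt hx))]
      exact hx.le
    have h2 : densMeasure S.f (Iic a) = 1 := by
      have hcompl : Iic a = (Ioi a)ᶜ := by simp
      rw [hcompl, measure_compl measurableSet_Ioi (S.mu_ne_top _), hIoi, S.mu_univ]
      simp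
    rw [h2] at hFr
    simp at hFr
    linarith [hr.2]
  · have hIic : densMeasure S.f (Iic a) = 0 := by
      rw [densMeasure, withDensity_apply _ measurableSet_Iic]
      rw [setLIntegral_eq_zero_iff measurableSet_Iic hmeasf]
      filter_upwards with x hx
      refine key x ?_
      rw [abs_of_neg h0, abs_of_nonpos (le_trans hx h0.le)]
      simp only [mem_Iic] at hx
      linarith
    rw [hIic] at hFr
    simp at hFr
    linarith [hr.1]

lemma Finv_lt {r s : ℝ} (hr : r ∈ Ioo (0:ℝ) 1) (hs : s ∈ Ioo (0:ℝ) 1) (hrs : r < s) :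
    S.Finv r < S.Finv s := by
  by_contra hc
  push_neg at hc
  have := S.Fr_mono hc
  rw [S.Fr_Finv hr, S.Fr_Finv hs] at this
  linarith

lemma mu_singleton (c : ℝ) : densMeasure S.f {c} = 0 := by
  rw [densMeasure, withDensity_apply _ (measurableSet_singleton c)]
  rw [Measure.restrict_eq_zero.mpr (by simp)]
  simp

lemma Fr_neg (c : ℝ) : S.Fr (-c) = 1 - S.Fr c := by
  have hmap : densMeasure S.f (Iic (-c)) = densMeasure S.f (Ici c) := by
    rw [densMeasure, withDensity_apply _ measurableSet_Iic,
      withDensity_apply _ measurableSet_Ici]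
    have hvol : (volume : Measure ℝ) = Measure.map Neg.neg volume :=
      (Measure.map_neg_eq_self (volume : Measure ℝ)).symm
    calc ∫⁻ x in Iic (-c), ENNReal.ofReal (S.f x) ∂volume
        = ∫⁻ x in Iic (-c), ENNReal.ofReal (S.f x) ∂(Measure.map Neg.neg volume) := by
          rw [← hvol]
      _ = ∫⁻ x in Neg.neg ⁻¹' (Iic (-c)), ENNReal.ofReal (S.f (-x)) ∂volume := by
          exact setLIntegral_map (f := fun x : ℝ => ENNReal.ofReal (S.f x))
            measurableSet_Iic (ENNReal.measurable_ofReal.comp S.hf_meas) measurable_neg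
      _ = ∫⁻ x in Ici c, ENNReal.ofReal (S.f x) ∂volume := by
          congr 1
          · ext x; simp [neg_le]
          · ext x; rw [S.hf_even x]
  have hIci : densMeasure S.f (Ici c) = densMeasure S.f (Ioi c) := by
    have : Ici c = Ioi c ∪ {c} := by
      ext x; simp [le_iff_lt_or_eq, or_comm, eq_comm]
    rw [this]
    refine le_antisymm ((measure_union_le _ _).trans ?_) (measure_mono subset_union_left)
    rw [S.mu_singleton c, add_zero]
  have hcompl : densMeasure S.f (Ioi c) = 1 - densMeasure S.f (Iic c) := by
    have : Ioi c = (Iic c)ᶜ := by simp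
    rw [this, measure_compl measurableSet_Iic (S.mu_ne_top _), S.mu_univ]
  rw [Fr, Fr, hmap, hIci, hcompl]
  rw [ENNReal.toReal_sub_of_le (by
    rw [← S.mu_univ]; exact measure_mono (subset_univ _)) (by simp)]
  simp

lemma Finv_neg {r : ℝ} (hr : r ∈ Ioo (0:ℝ) 1) : S.Finv (1 - r) = - S.Finv r := by
  have hr' : (1 - r) ∈ Ioo (0:ℝ) 1 := ⟨by linarith [hr.2], by linarith [hr.1]⟩
  have h1 : S.Fr (S.Finv (1 - r)) = 1 - r := S.Fr_Finv hr'
  have h2 : S.Fr (- S.Finv r) = 1 - r := by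
    rw [S.Fr_neg, S.Fr_Finv hr]
  have hs1 : 0 < S.f (S.Finv (1 - r)) := S.Finv_supp hr'
  have hs2 : 0 < S.f (- S.Finv r) := by
    rw [S.hf_even]; exact S.Finv_supp hr
  rcases lt_trichotomy (S.Finv (1 - r)) (- S.Finv r) with h | h | h
  · exact absurd (S.Fr_lt h hs1 hs2) (by rw [h1, h2]; simp)
  · exact h
  · exact absurd (S.Fr_lt h hs2 hs1) (by rw [h1, h2]; simp)

lemma J_symm {r : ℝ} (hr : r ∈ Ioo (0:ℝ) 1) : S.J (1 - r) = S.J r := by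
  have hr' : (1 - r) ∈ Ioo (0:ℝ) 1 := ⟨by linarith [hr.2], by linarith [hr.1]⟩
  rw [S.hJ _ hr', S.hJ _ hr, S.Finv_neg hr, S.hf_even]

lemma g_prod {x y h : ℝ} (hxy : x ≤ y) (hh : 0 ≤ h) :
    S.g x * S.g (y + h) ≤ S.g (x + h) * S.g y := by
  rcases eq_or_lt_of_le (S.g_nonneg x) with h0 | hgx
  · rw [← h0, zero_mul]; exact mul_nonneg (S.g_nonneg _) (S.g_nonneg _)
  rcases eq_or_lt_of_le (S.g_nonneg (y + h)) with h0 | hgyh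
  · rw [← h0, mul_zero]; exact mul_nonneg (S.g_nonneg _) (S.g_nonneg _)
  have hfx : 0 < S.f x := S.g_pos_iff.1 hgx
  have hfyh : 0 < S.f (y + h) := S.g_pos_iff.1 hgyh
  have hmem : ∀ z : ℝ, x ≤ z → z ≤ y + h → 0 < S.f z := fun z h1 h2 =>
    S.supp_ordConn.out hfx hfyh ⟨h1, h2⟩
  have hfxh : 0 < S.f (x + h) := hmem _ (by linarith) (by linarith)
  have hfy : 0 < S.f y := hmem _ hxy (by linarith)
  rcases eq_or_lt_of_le (by linarith : x ≤ y + h) with hL | hL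
  · -- degenerate: h = 0 and x = y
    have h0 : h = 0 := by linarith [hL.symm.le, hL.le]
    have h1 : y = x := by
      have := hL.le
      have := hL.symm.le
      linarith
    rw [h0, h1, add_zero]
  · set L : ℝ := y + h - x with hLdef
    have hLpos : 0 < L := by simp only [hLdef]; linarith
    set t : ℝ := h / L with ht
    have ht0 : 0 ≤ t := div_nonneg hh hLpos.le
    have ht1 : t ≤ 1 := by
      rw [ht, div_le_one hLpos]; simp only [hLdef]; linarith
    have e1 : (1 - t) * x + t * (y + h) = x + h := by
      simp only [ht]
      field_simp
      ring
    have e2 : t * x + (1 - t) * (y + h) = y := by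
      simp only [ht]
      field_simp
      ring
    have c1 := S.hf_logConcave.2 (show x ∈ {z : ℝ | 0 < S.f z} from hfx) (show (y + h) ∈ {z : ℝ | 0 < S.f z} from hfyh)
      (by linarith : (0:ℝ) ≤ 1 - t) ht0 (by ring)
    have c2 := S.hf_logConcave.2 (show x ∈ {z : ℝ | 0 < S.f z} from hfx) (show (y + h) ∈ {z : ℝ | 0 < S.f z} from hfyh)
      ht0 (by linarith : (0:ℝ) ≤ 1 - t) (by ring)
    simp only [smul_eq_mul] at c1 c2
    rw [e1] at c1
    rw [e2] at c2
    have hsum : Real.log (S.f x) + Real.log (S.f (y + h)) ≤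
        Real.log (S.f (x + h)) + Real.log (S.f y) := by linarith
    rw [← Real.log_mul hfx.ne' hfyh.ne', ← Real.log_mul hfxh.ne' hfy.ne'] at hsum
    have := (Real.log_le_log_iff (by positivity) (by positivity)).1 hsum
    rw [S.g_eq_f hfx, S.g_eq_f hfyh, S.g_eq_f hfxh, S.g_eq_f hfy]
    exact this

lemma Phi_concave {h : ℝ} (hh : 0 < h) :
    ConcaveOn ℝ (Ioo (0:ℝ) 1) (fun p => S.Fr (S.Finv p + h)) := by
  apply concaveOn_of_slope_anti_adjacent (convex_Ioo 0 1)
  intro p q r hp hr hpq hqr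
  have hq : q ∈ Ioo (0:ℝ) 1 := ⟨hp.1.trans hpq, hqr.trans hr.2⟩
  set a := S.Finv p with hadef
  set b := S.Finv q with hbdef
  set c := S.Finv r with hcdef
  have hab : a < b := S.Finv_lt hp hq hpq
  have hbc : b < c := S.Finv_lt hq hr hqr
  -- integrability facts
  have hgint : ∀ u v : ℝ, IntervalIntegrable S.g volume u v :=
    fun u v => S.g_integrable.intervalIntegrable
  have hgh : ∀ u v : ℝ, IntervalIntegrable (fun x => S.g (x + h)) volume u v := by
    intro u v
    have := (hgint (u + h) (v + h)).comp_add_right h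
    simpa using this
  -- the four quantities
  set A : ℝ := ∫ x in a..b, S.g (x + h) with hA
  set B : ℝ := ∫ x in b..c, S.g (x + h) with hB
  set C : ℝ := ∫ x in a..b, S.g x with hC
  set D : ℝ := ∫ x in b..c, S.g x with hD
  have hCval : C = q - p := by rw [hC, ← S.Fr_sub hab.le, S.Fr_Finv hp, S.Fr_Finv hq]
  have hDval : D = r - q := by rw [hD, ← S.Fr_sub hbc.le, S.Fr_Finv hq, S.Fr_Finv hr]
  have hFrA : S.Fr (b + h) - S.Fr (a + h) = A := by
    rw [S.Fr_sub (by linarith), hA, ← intervalIntegral.integral_comp_add_right]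
  have hFrB : S.Fr (c + h) - S.Fr (b + h) = B := by
    rw [S.Fr_sub (by linarith), hB, ← intervalIntegral.integral_comp_add_right]
  have hCpos : 0 < C := by rw [hCval]; linarith
  have hDpos : 0 < D := by rw [hDval]; linarith
  -- pointwise step
  have step1 : ∀ y : ℝ, b ≤ y → S.g (y + h) * C ≤ S.g y * A := by
    intro y hy
    have lhs : S.g (y + h) * C = ∫ x in a..b, S.g x * S.g (y + h) := by
      rw [hC, mul_comm, ← intervalIntegral.integral_mul_const]
    have rhs : S.g y * A = ∫ x in a..b, S.g (x + h) * S.g y := by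
      rw [hA, mul_comm, ← intervalIntegral.integral_mul_const]
    rw [lhs, rhs]
    apply intervalIntegral.integral_mono_on hab.le
      ((hgint a b).mul_const _) ((hgh a b).mul_const _)
    intro x hx
    exact S.g_prod (le_trans hx.2 hy) hh.le
  -- integrate step1 over y ∈ [b, c]
  have step2 : B * C ≤ D * A := by
    have lhs : B * C = ∫ y in b..c, S.g (y + h) * C := by
      rw [hB, ← intervalIntegral.integral_mul_const]
    have rhs : D * A = ∫ y in b..c, S.g y * A := by
      rw [hD, ← intervalIntegral.integral_mul_const]
    rw [lhs, rhs]
    apply intervalIntegral.integral_mono_on hbc.le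
      ((hgh b c).mul_const _) ((hgint b c).mul_const _)
    intro y hy
    exact step1 y hy.1
  rw [hFrA, hFrB, ← hCval, ← hDval]
  rw [div_le_div_iff₀ hDpos hCpos]
  linarith

lemma Fr_deriv {a : ℝ} (ha : 0 < S.f a) : HasDerivAt S.Fr (S.g a) a := by
  have h1 : HasDerivAt (fun u => ∫ x in (a - 1)..u, S.g x) (S.g a) a :=
    intervalIntegral.integral_hasDerivAt_right S.g_integrable.intervalIntegrable
      (S.g_meas.stronglyMeasurable.stronglyMeasurableAtFilter)
      (S.g_contAt ha)
  have h2 : ∀ u : ℝ, S.Fr u = S.Fr (a - 1) + ∫ x in (a - 1)..u, S.g x := by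
    intro u
    rcases le_total (a - 1) u with hu | hu
    · rw [← S.Fr_sub hu]; ring
    · rw [intervalIntegral.integral_symm, ← S.Fr_sub hu]; ring
  have h3 : HasDerivAt (fun u => S.Fr (a - 1) + ∫ x in (a - 1)..u, S.g x) (S.g a) a :=
    h1.const_add _
  exact (funext h2 : S.Fr = _) ▸ h3

lemma tendsto_ratio {r : ℝ} (hr : r ∈ Ioo (0:ℝ) 1) :
    Tendsto (fun h => (S.Fr (S.Finv r + h) - r) / h) (𝓝[>] (0:ℝ)) (𝓝 (S.J r)) := by
  set a := S.Finv r with hadef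
  have hd := S.Fr_deriv (S.Finv_supp hr)
  rw [hasDerivAt_iff_tendsto_slope] at hd
  have hmap : Tendsto (fun h : ℝ => a + h) (𝓝[>] (0:ℝ)) (𝓝[≠] a) := by
    have h1 : Tendsto (fun h : ℝ => a + h) (𝓝[>] (0:ℝ)) (𝓝[>] a) := by
      apply tendsto_nhdsWithin_of_tendsto_nhds_of_eventually_within
      · have : Tendsto (fun h : ℝ => a + h) (𝓝 (0:ℝ)) (𝓝 a) := by
          simpa using (continuous_add_left a).tendsto (0:ℝ)
        exact this.mono_left nhdsWithin_le_nhds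
      · filter_upwards [self_mem_nhdsWithin] with z hz
        simpa using hz
    exact h1.mono_right (nhdsWithin_mono a fun z hz => ne_of_gt hz)
  have hcomp := hd.comp hmap
  have heq : (fun h : ℝ => (S.Fr (S.Finv r + h) - r) / h) = (slope S.Fr a) ∘ (fun h : ℝ => a + h) := by
    funext z
    simp only [Function.comp_apply, slope_def_field, hadef]
    rw [S.Fr_Finv hr]
    congr 1
    ring
  rw [heq]
  have hJg : S.J r = S.g a := by
    rw [S.hJ r hr, S.g_eq_f (S.Finv_supp hr)]
  rw [hJg]
  exact hcomp

lemma J_concave : ConcaveOn ℝ (Ioo (0:ℝ) 1) S.J := by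
  refine ⟨convex_Ioo 0 1, ?_⟩
  intro p hp q hq α β hα hβ hαβ
  have hc : α • p + β • q ∈ Ioo (0:ℝ) 1 := (convex_Ioo 0 1) hp hq hα hβ hαβ
  have key : ∀ h : ℝ, h ∈ Ioi (0:ℝ) →
      α * ((S.Fr (S.Finv p + h) - p) / h) + β * ((S.Fr (S.Finv q + h) - q) / h) ≤
        (S.Fr (S.Finv (α • p + β • q) + h) - (α • p + β • q)) / h := by
    intro h hh
    have hh' : (0:ℝ) < h := hh
    have hcon := (S.Phi_concave hh').2 hp hq hα hβ hαβ
    simp only [smul_eq_mul] at hcon hc ⊢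
    rw [show α * ((S.Fr (S.Finv p + h) - p) / h) + β * ((S.Fr (S.Finv q + h) - q) / h) =
      (α * S.Fr (S.Finv p + h) + β * S.Fr (S.Finv q + h) - (α * p + β * q)) / h from by ring]
    have hnum : α * S.Fr (S.Finv p + h) + β * S.Fr (S.Finv q + h) - (α * p + β * q) ≤
        S.Fr (S.Finv (α * p + β * q) + h) - (α * p + β * q) := by linarith
    gcongr
  have hlim1 : Tendsto (fun h : ℝ => α * ((S.Fr (S.Finv p + h) - p) / h) +
      β * ((S.Fr (S.Finv q + h) - q) / h)) (𝓝[>] (0:ℝ)) (𝓝 (α * S.J p + β * S.J q)) :=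
    ((S.tendsto_ratio hp).const_mul α).add ((S.tendsto_ratio hq).const_mul β)
  have hlim2 := S.tendsto_ratio hc
  have := le_of_tendsto_of_tendsto hlim1 hlim2 (eventually_nhdsWithin_of_forall key)
  simpa only [smul_eq_mul] using this

lemma J_contOn : ContinuousOn S.J (Ioo (0:ℝ) 1) :=
  S.J_concave.continuousOn isOpen_Ioo

lemma J_le {s t : ℝ} (hs : s ∈ Ioo (0:ℝ) 1) (hst : s ≤ t) (hts : t ≤ 1 - s) :
    S.J s ≤ S.J t := by
  rcases eq_or_lt_of_le hst with rfl | hlt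
  · exact le_refl _
  have hs2 : 1 - s ∈ Ioo (0:ℝ) 1 := ⟨by linarith [hs.2], by linarith [hs.1]⟩
  have h2s : s < 1 - s := by linarith
  have hden : 0 < 1 - 2 * s := by linarith
  have hl0 : 0 ≤ (1 - s - t) / (1 - 2 * s) := div_nonneg (by linarith) hden.le
  have hl1 : (1 - s - t) / (1 - 2 * s) ≤ 1 := by rw [div_le_one hden]; linarith
  have hcomb : ((1 - s - t) / (1 - 2 * s)) • s + (1 - (1 - s - t) / (1 - 2 * s)) • (1 - s) = t := by
    simp only [smul_eq_mul]
    have hden0 : 1 - s * 2 ≠ 0 := by linarith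
    field_simp
    ring
  have hb0 : 0 ≤ 1 - (1 - s - t) / (1 - 2 * s) := by linarith
  have hsum : (1 - s - t) / (1 - 2 * s) + (1 - (1 - s - t) / (1 - 2 * s)) = 1 := by ring
  have hcon := S.J_concave.2 hs hs2 hl0 hb0 hsum
  rw [hcomb, S.J_symm hs] at hcon
  simp only [smul_eq_mul] at hcon
  calc S.J s = ((1 - s - t) / (1 - 2 * s)) * S.J s
      + (1 - (1 - s - t) / (1 - 2 * s)) * S.J s := by ring
  _ ≤ S.J t := hcon

end LogConcaveSetup

/-- For fixed `0 < x ≤ 1/2`, the isoperimetric deficit function `y ↦ K_μ(x, y)` is lower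
semicontinuous on `(0, min (2x) (1-x)]`, continuous on `(0, x]`, and concave on
`(x, min (2x) (1-x)]`. -/
theorem Kfun_regularity (S : LogConcaveSetup) (x : ℝ) (hx0 : 0 < x) (hx : x ≤ 1 / 2) :
    LowerSemicontinuousOn (fun y => Kfun S.J x y) (Ioc (0:ℝ) (min (2 * x) (1 - x))) ∧
    ContinuousOn (fun y => Kfun S.J x y) (Ioc (0:ℝ) x) ∧
    ConcaveOn ℝ (Ioc x (min (2 * x) (1 - x))) (fun y => Kfun S.J x y) := by
  have hx1 : x < 1 := by linarith
  set m := min (2 * x) (1 - x) with hm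
  have hm2x : m ≤ 2 * x := min_le_left _ _
  have hm1x : m ≤ 1 - x := min_le_right _ _
  have hxm : x ≤ m := le_min (by linarith) (by linarith)
  -- the two branch functions
  have memL1 : ∀ y ∈ Ioc (0:ℝ) x, x - y / 2 ∈ Ioo (0:ℝ) 1 :=
    fun y hy => ⟨by linarith [hy.1, hy.2], by linarith [hy.1]⟩
  have memL2 : ∀ y ∈ Ioc (0:ℝ) x, y / 2 ∈ Ioo (0:ℝ) 1 :=
    fun y hy => ⟨by linarith [hy.1], by linarith [hy.2]⟩
  have memR1 : ∀ y ∈ Ioc (0:ℝ) m, x + y / 2 ∈ Ioo (0:ℝ) 1 :=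
    fun y hy => ⟨by linarith [hy.1], by linarith [hy.2, hm1x]⟩
  have memR2 : ∀ y ∈ Ioc (0:ℝ) m, y / 2 ∈ Ioo (0:ℝ) 1 :=
    fun y hy => ⟨by linarith [hy.1], by linarith [hy.2, hm1x]⟩
  have hKl : ∀ y ∈ Ioc (0:ℝ) x, Kfun S.J x y = S.J (x - y / 2) - S.J x + S.J (y / 2) :=
    fun y hy => by rw [Kfun, if_pos hy.2]
  have hKr : ∀ y ∈ Ioc x m, Kfun S.J x y = S.J (x + y / 2) - S.J x + S.J (y / 2) :=
    fun y hy => by rw [Kfun, if_neg (not_le.2 hy.1)]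
  -- part 2 : continuity on (0, x]
  have part2 : ContinuousOn (fun y => Kfun S.J x y) (Ioc (0:ℝ) x) := by
    have hc1 : ContinuousOn (fun y : ℝ => S.J (x - y / 2)) (Ioc (0:ℝ) x) :=
      S.J_contOn.comp (by fun_prop) memL1
    have hc2 : ContinuousOn (fun y : ℝ => S.J (y / 2)) (Ioc (0:ℝ) x) :=
      S.J_contOn.comp (by fun_prop) memL2
    exact (((hc1.sub continuousOn_const).add hc2)).congr hKl
  -- the right branch is continuous at every point of (0, m]
  have hrfc : ∀ y ∈ Ioc (0:ℝ) m,
      ContinuousAt (fun y : ℝ => S.J (x + y / 2) - S.J x + S.J (y / 2)) y := by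
    intro y hy
    have hin1 : ContinuousAt (fun y : ℝ => x + y / 2) y := by fun_prop
    have hin2 : ContinuousAt (fun y : ℝ => y / 2) y := by fun_prop
    have h1 : ContinuousAt (fun y : ℝ => S.J (x + y / 2)) y :=
      ContinuousAt.comp (hf := hin1)
        (S.J_contOn.continuousAt (isOpen_Ioo.mem_nhds (memR1 y hy)))
    have h2 : ContinuousAt (fun y : ℝ => S.J (y / 2)) y :=
      ContinuousAt.comp (hf := hin2)
        (S.J_contOn.continuousAt (isOpen_Ioo.mem_nhds (memR2 y hy)))
    exact (h1.sub continuousAt_const).add h2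
  -- the right branch dominates Kfun on (0, m]
  have hdom : ∀ y ∈ Ioc (0:ℝ) m,
      Kfun S.J x y ≤ S.J (x + y / 2) - S.J x + S.J (y / 2) := by
    intro y hy
    rcases le_or_gt y x with hyx | hyx
    · rw [hKl y ⟨hy.1, hyx⟩]
      have hJle : S.J (x - y / 2) ≤ S.J (x + y / 2) :=
        S.J_le (memL1 y ⟨hy.1, hyx⟩) (by linarith [hy.1]) (by linarith)
      linarith
    · rw [hKr y ⟨hyx, hy.2⟩]
  -- part 3 : concavity on (x, m]
  have part3 : ConcaveOn ℝ (Ioc x m) (fun y => Kfun S.J x y) := by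
    refine ⟨convex_Ioc x m, ?_⟩
    intro u hu v hv α β hα hβ hαβ
    have hw : α • u + β • v ∈ Ioc x m := (convex_Ioc x m) hu hv hα hβ hαβ
    simp only [smul_eq_mul] at hw ⊢
    have hu' : u ∈ Ioc (0:ℝ) m := ⟨lt_trans hx0 hu.1, hu.2⟩
    have hv' : v ∈ Ioc (0:ℝ) m := ⟨lt_trans hx0 hv.1, hv.2⟩
    have hw' : (α * u + β * v) ∈ Ioc (0:ℝ) m := ⟨lt_trans hx0 hw.1, hw.2⟩
    rw [hKr u hu, hKr v hv, hKr _ hw]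
    have h1 := S.J_concave.2 (memR1 u hu') (memR1 v hv') hα hβ hαβ
    have h2 := S.J_concave.2 (memR2 u hu') (memR2 v hv') hα hβ hαβ
    simp only [smul_eq_mul] at h1 h2
    have e1 : α * (x + u / 2) + β * (x + v / 2) = x + (α * u + β * v) / 2 := by
      linear_combination x * hαβ
    have e2 : α * (u / 2) + β * (v / 2) = (α * u + β * v) / 2 := by ring
    rw [e1] at h1
    rw [e2] at h2
    have hJx : α * S.J x + β * S.J x = S.J x := by linear_combination S.J x * hαβ
    linarith
  -- part 1 : lower semicontinuity on (0, m]
  have part1 : LowerSemicontinuousOn (fun y => Kfun S.J x y) (Ioc (0:ℝ) m) := by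
    intro y hy c hc
    have hsplit : Ioc (0:ℝ) m = Ioc 0 x ∪ Ioc x m := (Ioc_union_Ioc_eq_Ioc hx0.le hxm).symm
    rw [hsplit, nhdsWithin_union, eventually_sup]
    constructor
    · rcases le_or_gt y x with hyx | hyx
      · have hcw : ContinuousWithinAt (fun y => Kfun S.J x y) (Ioc (0:ℝ) x) y :=
          part2 y ⟨hy.1, hyx⟩
        exact hcw (Ioi_mem_nhds hc)
      · have hnc : y ∉ closure (Ioc (0:ℝ) x) := by
          rw [closure_Ioc hx0.ne]
          intro hmem
          exact absurd hmem.2 (not_le.2 hyx)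
        have hb : 𝓝[Ioc (0:ℝ) x] y = ⊥ :=
          Filter.not_neBot.mp fun h => hnc (mem_closure_iff_nhdsWithin_neBot.mpr h)
        rw [hb]
        exact Filter.eventually_bot
    · have hlt : c < S.J (x + y / 2) - S.J x + S.J (y / 2) :=
        lt_of_lt_of_le hc (hdom y hy)
      have hev : ∀ᶠ z in 𝓝[Ioc x m] y,
          c < S.J (x + z / 2) - S.J x + S.J (z / 2) :=
        ((hrfc y hy).continuousWithinAt) (Ioi_mem_nhds hlt)
      filter_upwards [hev, self_mem_nhdsWithin] with z h1 h2
      rw [hKr z h2]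
      exact h1
  exact ⟨part1, part2, part3⟩
end

section
/- For all x, y with 0 < x ≤ 1/2 and 0 < y ≤ min(2x, 1−x), one has K_μ(x, y) ≥ L_μ(x, y) ≥ 0. -/
open MeasureTheory Set Filter Topology
open scoped ENNReal

section Aux

/-- Pointwise product inequality from log-concavity. -/
lemma aux_prod (f : ℝ → ℝ)
    (hconc : ConcaveOn ℝ {x : ℝ | 0 < f x} (fun x => Real.log (f x)))
    {t a b : ℝ} (hta : t ≤ a) (hab : a ≤ b)
    (hft : 0 < f t) (hfb : 0 < f b) :
    f t * f b ≤ f a * f (t + b - a) := by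
  rcases eq_or_lt_of_le (hta.trans hab) with h | h
  · have h1 : t = a := by linarith
    have h2 : a = b := by linarith
    subst h1; subst h2
    simp [mul_comm]
  · set θ : ℝ := (b - a) / (b - t) with hθdef
    have hbt : (0:ℝ) < b - t := by linarith
    have hθ0 : 0 ≤ θ := div_nonneg (by linarith) hbt.le
    have hθ1 : θ ≤ 1 := by
      rw [div_le_one hbt]; linarith
    have h1θ : 0 ≤ 1 - θ := by linarith
    have hsum : θ + (1 - θ) = 1 := by ring
    have hsum' : (1 - θ) + θ = 1 := by ring
    have hma : θ * t + (1 - θ) * b = a := by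
      rw [hθdef]; field_simp; ring
    have hmm : (1 - θ) * t + θ * b = t + b - a := by
      rw [hθdef]; field_simp; ring
    have htm : t ∈ {x : ℝ | 0 < f x} := hft
    have hbm : b ∈ {x : ℝ | 0 < f x} := hfb
    have hA := hconc.2 htm hbm hθ0 h1θ hsum
    have hM := hconc.2 htm hbm h1θ hθ0 hsum'
    have haS : a ∈ {x : ℝ | 0 < f x} := by
      have := hconc.1 htm hbm hθ0 h1θ hsum
      simpa [smul_eq_mul, hma] using this
    have hmS : t + b - a ∈ {x : ℝ | 0 < f x} := by
      have := hconc.1 htm hbm h1θ hθ0 hsum'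
      simpa [smul_eq_mul, hmm] using this
    have hfa : 0 < f a := haS
    have hfm : 0 < f (t + b - a) := hmS
    simp only [smul_eq_mul, hma, hmm] at hA hM
    have hlog : Real.log (f t) + Real.log (f b) ≤
        Real.log (f a) + Real.log (f (t + b - a)) := by linarith
    calc f t * f b = Real.exp (Real.log (f t) + Real.log (f b)) := by
          rw [Real.exp_add, Real.exp_log hft, Real.exp_log hfb]
      _ ≤ Real.exp (Real.log (f a) + Real.log (f (t + b - a))) := Real.exp_le_exp.2 hlog
      _ = f a * f (t + b - a) := by
          rw [Real.exp_add, Real.exp_log hfa, Real.exp_log hfm]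

lemma shift_Iic (g : ℝ → ℝ≥0∞) (hg : Measurable g) (a c : ℝ) :
    ∫⁻ t in Iic (a + c), g t = ∫⁻ t in Iic a, g (t + c) := by
  rw [← lintegral_indicator measurableSet_Iic, ← lintegral_indicator measurableSet_Iic,
    ← lintegral_add_right_eq_self (fun t => (Iic (a + c)).indicator g t) c]
  congr 1
  ext t
  by_cases h : t ≤ a
  · simp [Set.indicator, h, (by linarith : t + c ≤ a + c)]
  · simp [Set.indicator, h, (by intro hh; exact h (by linarith) : ¬ (t + c ≤ a + c))]

lemma shift_Ioi (g : ℝ → ℝ≥0∞) (hg : Measurable g) (a c : ℝ) :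
    ∫⁻ t in Ioi (a + c), g t = ∫⁻ t in Ioi a, g (t + c) := by
  rw [← lintegral_indicator measurableSet_Ioi, ← lintegral_indicator measurableSet_Ioi,
    ← lintegral_add_right_eq_self (fun t => (Ioi (a + c)).indicator g t) c]
  congr 1
  ext t
  by_cases h : a < t
  · simp [Set.indicator, h, (by linarith : a + c < t + c)]
  · simp [Set.indicator, h, (by intro hh; exact h (by linarith) : ¬ (a + c < t + c))]

lemma key1 (S : LogConcaveSetup) {a b : ℝ} (hab : a ≤ b)
    (hfa : 0 < S.f a) (hfb : 0 < S.f b) :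
    ENNReal.ofReal (S.f b) * densMeasure S.f (Iic a)
      ≤ ENNReal.ofReal (S.f a) * densMeasure S.f (Iic b) := by
  have hmeas : Measurable fun x => ENNReal.ofReal (S.f x) :=
    ENNReal.measurable_ofReal.comp S.hf_meas
  have hIica : densMeasure S.f (Iic a) = ∫⁻ t in Iic a, ENNReal.ofReal (S.f t) :=
    withDensity_apply _ measurableSet_Iic
  have hmeas2 : Measurable (fun t : ℝ => ENNReal.ofReal (S.f (t + (b - a)))) :=
    hmeas.comp (measurable_add_const _)
  have hIicb : densMeasure S.f (Iic b)
      = ∫⁻ t in Iic a, ENNReal.ofReal (S.f (t + (b - a))) := by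
    rw [densMeasure, withDensity_apply _ measurableSet_Iic,
      show Iic b = Iic (a + (b - a)) by norm_num, shift_Iic _ hmeas a (b - a)]
  rw [hIica, hIicb, ← lintegral_const_mul _ hmeas, ← lintegral_const_mul _ hmeas2]
  refine setLIntegral_mono (hmeas2.const_mul _) ?_
  intro t ht
  rcases le_or_gt (S.f t) 0 with hft | hft
  · simp [ENNReal.ofReal_of_nonpos hft]
  · have hprod := aux_prod S.f S.hf_logConcave ht hab hft hfb
    rw [show t + (b - a) = t + b - a by ring, ← ENNReal.ofReal_mul hfb.le,
      ← ENNReal.ofReal_mul hfa.le]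
    exact ENNReal.ofReal_le_ofReal (by nlinarith [hprod])

lemma key2 (S : LogConcaveSetup) {a b : ℝ} (hab : a ≤ b)
    (hfa : 0 < S.f a) (hfb : 0 < S.f b) :
    ENNReal.ofReal (S.f a) * densMeasure S.f (Ioi b)
      ≤ ENNReal.ofReal (S.f b) * densMeasure S.f (Ioi a) := by
  have hmeas : Measurable fun x => ENNReal.ofReal (S.f x) :=
    ENNReal.measurable_ofReal.comp S.hf_meas
  have hIob : densMeasure S.f (Ioi b) = ∫⁻ t in Ioi b, ENNReal.ofReal (S.f t) :=
    withDensity_apply _ measurableSet_Ioi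
  have hmeas2 : Measurable (fun t : ℝ => ENNReal.ofReal (S.f (t + (a - b)))) :=
    hmeas.comp (measurable_add_const _)
  have hIoa : densMeasure S.f (Ioi a)
      = ∫⁻ t in Ioi b, ENNReal.ofReal (S.f (t + (a - b))) := by
    rw [densMeasure, withDensity_apply _ measurableSet_Ioi,
      show Ioi a = Ioi (b + (a - b)) by norm_num, shift_Ioi _ hmeas b (a - b)]
  rw [hIob, hIoa, ← lintegral_const_mul _ hmeas, ← lintegral_const_mul _ hmeas2]
  refine setLIntegral_mono (hmeas2.const_mul _) ?_
  intro t ht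
  rcases le_or_gt (S.f t) 0 with hft | hft
  · simp [ENNReal.ofReal_of_nonpos hft]
  · have hprod := aux_prod S.f S.hf_logConcave hab (le_of_lt ht) hfa hft
    rw [show a + t - b = t + (a - b) by ring] at hprod
    rw [← ENNReal.ofReal_mul hfa.le, ← ENNReal.ofReal_mul hfb.le]
    exact ENNReal.ofReal_le_ofReal (by nlinarith [hprod])

/-- `f` is positive at `Finv r` for `r ∈ (0,1)`. -/
lemma Jpos (S : LogConcaveSetup) {r : ℝ} (hr : r ∈ Ioo (0:ℝ) 1) :
    0 < S.f (S.Finv r) := by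
  haveI := S.hprob
  by_contra h
  push_neg at h
  set t := S.Finv r with ht
  have hb : S.b₀ ≤ ENNReal.ofReal |t| := by
    by_contra h'
    push_neg at h'
    exact absurd ((S.hf_pos t).2 h') (not_lt.2 h)
  have hF := S.hFinv r hr
  rcases le_or_gt 0 t with htt | htt
  · have hz : densMeasure S.f (Ioi t) = 0 := by
      rw [densMeasure, withDensity_apply _ measurableSet_Ioi]
      have hzero : ∀ x ∈ Ioi t, ENNReal.ofReal (S.f x) = (0:ℝ≥0∞) := by
        intro x hx
        have hxabs : |t| ≤ |x| := by
          rw [abs_of_nonneg htt, abs_of_nonneg (htt.trans (le_of_lt hx))]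
          exact le_of_lt hx
        have : ¬ 0 < S.f x := by
          rw [S.hf_pos x]
          exact not_lt.2 (hb.trans (ENNReal.ofReal_le_ofReal hxabs))
        exact ENNReal.ofReal_of_nonpos (not_lt.1 this)
      calc ∫⁻ x in Ioi t, ENNReal.ofReal (S.f x)
          = ∫⁻ _ in Ioi t, (0:ℝ≥0∞) :=
            setLIntegral_congr_fun measurableSet_Ioi hzero
        _ = 0 := lintegral_zero
    have h1 : densMeasure S.f (Iic t) = 1 := by
      have := measure_compl (μ := densMeasure S.f) (s := Ioi t) measurableSet_Ioi
        (measure_ne_top _ _)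
      rw [compl_Ioi, hz, measure_univ, tsub_zero] at this
      exact this
    rw [h1] at hF
    simp at hF
    linarith [hr.2, hF]
  · have hz : densMeasure S.f (Iic t) = 0 := by
      rw [densMeasure, withDensity_apply _ measurableSet_Iic]
      have hzero : ∀ x ∈ Iic t, ENNReal.ofReal (S.f x) = (0:ℝ≥0∞) := by
        intro x hx
        have hx' : x ≤ t := hx
        have hxabs : |t| ≤ |x| := by
          rw [abs_of_neg htt, abs_of_neg (lt_of_le_of_lt hx' htt)]
          linarith
        have : ¬ 0 < S.f x := by
          rw [S.hf_pos x]
          exact not_lt.2 (hb.trans (ENNReal.ofReal_le_ofReal hxabs))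
        exact ENNReal.ofReal_of_nonpos (not_lt.1 this)
      calc ∫⁻ x in Iic t, ENNReal.ofReal (S.f x)
          = ∫⁻ _ in Iic t, (0:ℝ≥0∞) :=
            setLIntegral_congr_fun measurableSet_Iic hzero
        _ = 0 := lintegral_zero
    rw [hz] at hF
    simp at hF
    linarith [hr.1]

lemma Finv_mono (S : LogConcaveSetup) {s r : ℝ} (hs : s ∈ Ioo (0:ℝ) 1)
    (hr : r ∈ Ioo (0:ℝ) 1) (h : s ≤ r) : S.Finv s ≤ S.Finv r := by
  haveI := S.hprob
  rcases eq_or_lt_of_le h with rfl | h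
  · exact le_refl _
  by_contra hc
  push_neg at hc
  have hsub : Iic (S.Finv r) ⊆ Iic (S.Finv s) := Iic_subset_Iic.2 hc.le
  have := ENNReal.toReal_mono (measure_ne_top _ _)
    (measure_mono (μ := densMeasure S.f) hsub)
  rw [S.hFinv r hr, S.hFinv s hs] at this
  linarith

lemma measure_Iic_eq (S : LogConcaveSetup) {r : ℝ} (hr : r ∈ Ioo (0:ℝ) 1) :
    densMeasure S.f (Iic (S.Finv r)) = ENNReal.ofReal r := by
  haveI := S.hprob
  have h := S.hFinv r hr
  conv_rhs => rw [← h]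
  exact (ENNReal.ofReal_toReal (measure_ne_top _ _)).symm

lemma measure_Ioi_eq (S : LogConcaveSetup) {r : ℝ} (hr : r ∈ Ioo (0:ℝ) 1) :
    densMeasure S.f (Ioi (S.Finv r)) = ENNReal.ofReal (1 - r) := by
  haveI := S.hprob
  have := measure_compl (μ := densMeasure S.f) (s := Iic (S.Finv r)) measurableSet_Iic
    (measure_ne_top _ _)
  rw [compl_Iic, measure_univ, measure_Iic_eq S hr] at this
  rw [this, ENNReal.ofReal_sub _ hr.1.le, ENNReal.ofReal_one]

/-- `J r / r` is nonincreasing: `J r * s ≤ J s * r` for `s ≤ r`. -/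
lemma P1 (S : LogConcaveSetup) {s r : ℝ} (hs : s ∈ Ioo (0:ℝ) 1)
    (hr : r ∈ Ioo (0:ℝ) 1) (hsr : s ≤ r) : S.J r * s ≤ S.J s * r := by
  haveI := S.hprob
  have hab := Finv_mono S hs hr hsr
  have hfa := Jpos S hs
  have hfb := Jpos S hr
  have h := key1 S hab hfa hfb
  rw [measure_Iic_eq S hs, measure_Iic_eq S hr, ← ENNReal.ofReal_mul hfb.le,
    ← ENNReal.ofReal_mul hfa.le] at h
  have h' := (ENNReal.ofReal_le_ofReal_iff (mul_nonneg hfa.le hr.1.le)).1 h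
  rw [S.hJ r hr, S.hJ s hs]
  linarith

/-- `J r / (1-r)` is nondecreasing: `J r * (1-s) ≤ J s * (1-r)` for `r ≤ s`. -/
lemma P2 (S : LogConcaveSetup) {r s : ℝ} (hr : r ∈ Ioo (0:ℝ) 1)
    (hs : s ∈ Ioo (0:ℝ) 1) (hrs : r ≤ s) : S.J r * (1 - s) ≤ S.J s * (1 - r) := by
  haveI := S.hprob
  have hab := Finv_mono S hr hs hrs
  have hfa := Jpos S hr
  have hfb := Jpos S hs
  have h := key2 S hab hfa hfb
  rw [measure_Ioi_eq S hr, measure_Ioi_eq S hs, ← ENNReal.ofReal_mul hfa.le,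
    ← ENNReal.ofReal_mul hfb.le] at h
  have h' := (ENNReal.ofReal_le_ofReal_iff (mul_nonneg hfb.le (by linarith [hr.2]))).1 h
  rw [S.hJ r hr, S.hJ s hs]
  linarith

end Aux


/-- For all `0 < x ≤ 1/2` and `0 < y ≤ min (2x) (1-x)`, one has
`K_μ(x, y) ≥ L_μ(x, y) ≥ 0`. -/
theorem Kfun_ge_Lfun (S : LogConcaveSetup) (x y : ℝ)
    (hx0 : 0 < x) (hx : x ≤ 1 / 2)
    (hy0 : 0 < y) (hy : y ≤ min (2 * x) (1 - x)) :
    Lfun S.J x y ≤ Kfun S.J x y ∧ 0 ≤ Lfun S.J x y := by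
  obtain ⟨hy2x, hy1x⟩ := le_min_iff.mp hy
  have hx1 : x ∈ Ioo (0:ℝ) 1 := ⟨hx0, by linarith⟩
  have hy2 : y / 2 ∈ Ioo (0:ℝ) 1 := ⟨by linarith, by linarith⟩
  have hJx : 0 < S.J x := by rw [S.hJ x hx1]; exact Jpos S hx1
  have hJy2 : 0 < S.J (y / 2) := by rw [S.hJ _ hy2]; exact Jpos S hy2
  unfold Kfun Lfun
  split_ifs with hyx
  · -- y ≤ x
    have hm : x - y / 2 ∈ Ioo (0:ℝ) 1 := ⟨by linarith, by linarith⟩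
    have hP1a := P1 S hm hx1 (by linarith)
    have hP1b := P1 S hy2 hx1 (by linarith)
    constructor
    · have key : S.J x - y / (2 * x) * S.J x ≤ S.J (x - y / 2) := by
        have expand : S.J x - y / (2 * x) * S.J x = S.J x * (x - y / 2) / x := by
          field_simp
        rw [expand, div_le_iff₀ hx0]
        exact hP1a
      linarith
    · rw [sub_nonneg, div_mul_eq_mul_div, div_le_iff₀ (by positivity : (0:ℝ) < 2 * x)]
      nlinarith [hP1b]
  · -- x < y
    push_neg at hyx
    have h1x : (0:ℝ) < 1 - x := by linarith
    have hm : x + y / 2 ∈ Ioo (0:ℝ) 1 := ⟨by linarith, by linarith⟩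
    have hP2a := P2 S hx1 hm (by linarith)
    constructor
    · have key : S.J x - y / (2 * (1 - x)) * S.J x ≤ S.J (x + y / 2) := by
        have expand : S.J x - y / (2 * (1 - x)) * S.J x
            = S.J x * (1 - (x + y / 2)) / (1 - x) := by
          field_simp
          ring
        rw [expand, div_le_iff₀ h1x]
        exact hP2a
      linarith
    · rw [sub_nonneg, div_mul_eq_mul_div,
        div_le_iff₀ (by linarith : (0:ℝ) < 2 * (1 - x))]
      by_cases hyx2 : y / 2 ≤ x
      · have hP1b := P1 S hy2 hx1 hyx2
        nlinarith [hJy2.le, hx]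
      · push_neg at hyx2
        have hP2b := P2 S hx1 hy2 hyx2.le
        nlinarith [hJx.le, hy1x, hx0]
end
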